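/- arXiv:1304.7571 — 7 statements merged into one kernel-verified Lean document; each statement's English description precedes it below -/
import Mathlib

section
/- Let T = (R, F) be a tree with nonnegative edge costs c, and let (R, 𝓔) be a connected hypergraph on the same vertex set R. For each hyperedge A ∈ 𝓔, let F(A) ⊆ F be a maximum-cost set of edges of T such that contracting A to a single vertex in T \ F(A) yields a tree. Then ∑_{A ∈ 𝓔} c(F(A)) ≥ c(F). -/
open SimpleGraph

variable {V : Type*}

/-- The setoid identifying all points of `A` with each other. -/
def contractSetoid (A : Set V) : Setoid V where
  r x y := x = y ∨ (x ∈ A ∧ y ∈ A)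
  iseqv := by
    constructor
    · intro x; exact Or.inl rfl
    · rintro x y (rfl | ⟨hx, hy⟩)
      · exact Or.inl rfl
      · exact Or.inr ⟨hy, hx⟩
    · rintro x y z (rfl | ⟨hx, hy⟩) (rfl | ⟨hy', hz⟩)
      · exact Or.inl rfl
      · exact Or.inr ⟨hy', hz⟩
      · exact Or.inr ⟨hx, hy⟩
      · exact Or.inr ⟨hx, hz⟩

/-- The graph obtained from `G` by shrinking the set `A` into a single node. -/
def contract (G : SimpleGraph V) (A : Set V) :
    SimpleGraph (Quotient (contractSetoid A)) where
  Adj q q' := q ≠ q' ∧ ∃ x y : V, Quotient.mk (contractSetoid A) x = q ∧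
    Quotient.mk (contractSetoid A) y = q' ∧ G.Adj x y
  symm := ⟨by
    rintro q q' ⟨hne, x, y, hx, hy, hadj⟩
    exact ⟨hne.symm, y, x, hy, hx, hadj.symm⟩⟩
  loopless := ⟨by intro q h; exact h.1 rfl⟩

/-- `A` overlaps the edge set `F'` in `T`: the graph obtained from `T \ F'` by
shrinking `A` into a single node is a tree. -/
def Overlaps (T : SimpleGraph V) (A : Set V) (F' : Finset (Sym2 V)) : Prop :=
  (contract (T.deleteEdges ↑F') A).IsTree

set_option linter.unusedSectionVars false

variable [DecidableEq V]

def GUg (U : Finset (Sym2 V)) : SimpleGraph V := fromEdgeSet ↑U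

lemma GUg_adj {U : Finset (Sym2 V)} {x y : V} :
    (GUg U).Adj x y ↔ s(x, y) ∈ U ∧ x ≠ y := by
  simp [GUg]

noncomputable def tpath {T : SimpleGraph V} (hT : T.IsTree) (v w : V) : T.Walk v w :=
  (hT.existsUnique_path v w).choose

lemma tpath_isPath {T : SimpleGraph V} (hT : T.IsTree) (v w : V) :
    (tpath hT v w).IsPath := (hT.existsUnique_path v w).choose_spec.1

lemma tpath_unique {T : SimpleGraph V} (hT : T.IsTree) {v w : V} (p : T.Walk v w)
    (hp : p.IsPath) : p = tpath hT v w :=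
  (hT.existsUnique_path v w).choose_spec.2 p hp



omit [DecidableEq V] in
lemma reachable_of_walk_delete {G : SimpleGraph V} {v w : V}
    (hvw : (G \ fromEdgeSet {s(v, w)}).Reachable v w) :
    ∀ {x y : V}, G.Walk x y → (G \ fromEdgeSet {s(v, w)}).Reachable x y := by
  intro x y p
  induction p with
  | nil => exact Reachable.refl _
  | cons h p ih =>
    rename_i a b c
    refine Reachable.trans ?_ ih
    by_cases he : s(a, b) = s(v, w)
    · rw [Sym2.eq_iff] at he
      rcases he with ⟨rfl, rfl⟩ | ⟨rfl, rfl⟩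
      · exact hvw
      · exact hvw.symm
    · exact Adj.reachable (by
        simp only [sdiff_adj, fromEdgeSet_adj]
        exact ⟨h, fun hc => he hc.1⟩)

lemma connected_delete_of_reachable {G : SimpleGraph V} {v w : V}
    (hG : G.Connected) (hvw : (G \ fromEdgeSet {s(v, w)}).Reachable v w) :
    (G \ fromEdgeSet {s(v, w)}).Connected := by
  have : Nonempty V := hG.nonempty
  refine Connected.mk fun x y => ?_
  exact reachable_of_walk_delete hvw (hG.preconnected x y).some

lemma exists_isTree_le [Fintype V] (G : SimpleGraph V) (hG : G.Connected) :
    ∃ H : SimpleGraph V, H ≤ G ∧ H.IsTree := by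
  classical
  generalize hgen : G.edgeFinset.card = n
  induction n using Nat.strong_induction_on generalizing G with
  | _ n ih =>
  by_cases hac : G.IsAcyclic
  · exact ⟨G, le_rfl, hG, hac⟩
  · rw [isAcyclic_iff_forall_adj_isBridge] at hac
    push_neg at hac
    obtain ⟨v, w, hadj, hbr⟩ := hac
    rw [isBridge_iff] at hbr
    have hre : (G \ fromEdgeSet {s(v, w)}).Reachable v w := by
      by_contra hre; exact hbr hre
    have hconn' := connected_delete_of_reachable hG hre
    have hlt : (G \ fromEdgeSet {s(v, w)}).edgeFinset.card < n := by
      subst hgen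
      apply Finset.card_lt_card
      rw [Finset.ssubset_iff_of_subset (edgeFinset_mono sdiff_le)]
      refine ⟨s(v, w), ?_, ?_⟩
      · rwa [mem_edgeFinset, mem_edgeSet]
      · intro h
        rw [mem_edgeFinset, edgeSet_sdiff, edgeSet_fromEdgeSet] at h
        exact h.2 ⟨rfl, by simp [hadj.ne]⟩
    obtain ⟨H, hle, htree⟩ := ih _ hlt _ hconn' (by convert rfl)
    exact ⟨H, hle.trans sdiff_le, htree⟩

lemma isTree_of_connected_of_card [Fintype V] (G : SimpleGraph V) [Fintype G.edgeSet] (hG : G.Connected)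
    (hcard : G.edgeFinset.card + 1 = Fintype.card V) : G.IsTree := by
  classical
  obtain ⟨H, hle, htree⟩ := exists_isTree_le G hG
  have hc2 := htree.card_edgeFinset
  have hsub : H.edgeFinset ⊆ G.edgeFinset := edgeFinset_mono hle
  have : H.edgeFinset = G.edgeFinset := Finset.eq_of_subset_of_card_le hsub (by omega)
  have : H = G := by
    rw [← edgeSet_inj, ← coe_edgeFinset, ← coe_edgeFinset, this]
  rwa [← this]

lemma tpath_adj_cases {T : SimpleGraph V} (hT : T.IsTree) {v w x : V} (hadj : T.Adj v w) :
    tpath hT v x = Walk.cons hadj (tpath hT w x) ∨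
      tpath hT w x = Walk.cons hadj.symm (tpath hT v x) := by
  by_cases hsup : w ∈ (tpath hT v x).support
  · left
    have hdec := ((tpath hT v x).take_spec hsup).symm
    have hdrop : (tpath hT v x).dropUntil w hsup = tpath hT w x :=
      tpath_unique hT _ ((tpath_isPath hT v x).dropUntil hsup)
    have htake : (tpath hT v x).takeUntil w hsup = Walk.cons hadj Walk.nil := by
      refine ((tpath_unique hT _ ?_).trans ?_).symm
      · exact (Path.singleton hadj).2
      · exact ((tpath_unique hT _ ((tpath_isPath hT v x).takeUntil hsup))).symm
    rw [htake, hdrop] at hdec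
    simpa using hdec
  · right
    refine (tpath_unique hT _ ?_).symm
    rw [Walk.cons_isPath_iff]
    exact ⟨tpath_isPath hT v x, hsup⟩

/-- Number of edges outside `U` on the canonical path from `v` to `r`. -/
noncomputable def cutlen (U : Finset (Sym2 V)) {T : SimpleGraph V} {v w : V}
    (p : T.Walk v w) : ℕ := (p.edges.filter (fun e => e ∉ U)).length

noncomputable def mu {T : SimpleGraph V} (hT : T.IsTree) (U : Finset (Sym2 V)) (r v : V) : ℕ :=
  cutlen U (tpath hT v r)

lemma cutlen_cons {U : Finset (Sym2 V)} {T : SimpleGraph V} {v w x : V} (h : T.Adj v w)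
    (p : T.Walk w x) :
    cutlen U (Walk.cons h p) = (if s(v, w) ∈ U then 0 else 1) + cutlen U p := by
  simp only [cutlen, Walk.edges_cons, List.filter_cons]
  split_ifs with h1 <;> simp_all <;> omega

lemma reachable_of_all_edges_mem {U : Finset (Sym2 V)} {T : SimpleGraph V} {v w : V}
    (p : T.Walk v w) (h : ∀ e ∈ p.edges, e ∈ U) : (GUg U).Reachable v w := by
  induction p with
  | nil => exact Reachable.refl _
  | cons ha p ih =>
    refine Reachable.trans (Adj.reachable ?_) (ih fun e he => h e (by simp [he]))
    exact GUg_adj.2 ⟨h _ (by simp), ha.ne⟩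

lemma mu_adj_mem {U : Finset (Sym2 V)} {T : SimpleGraph V} (hT : T.IsTree) {r v w : V}
    (hadj : T.Adj v w) (hU : s(v, w) ∈ U) : mu hT U r v = mu hT U r w := by
  rcases tpath_adj_cases hT (x := r) hadj with h | h
  · rw [mu, h, cutlen_cons, if_pos hU, zero_add]; rfl
  · rw [mu, mu, h, cutlen_cons, if_pos (by rwa [Sym2.eq_swap]), zero_add]

lemma mu_reachable {U : Finset (Sym2 V)} {T : SimpleGraph V} (hT : T.IsTree) {r v w : V}
    (hU : ↑U ⊆ T.edgeSet) (h : (GUg U).Reachable v w) : mu hT U r v = mu hT U r w := by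
  obtain ⟨p⟩ := h
  induction p with
  | nil => rfl
  | @cons a b c ha p ih =>
    rw [GUg_adj] at ha
    have hadj : T.Adj a b := by
      have := hU ha.1; rwa [mem_edgeSet] at this
    exact (mu_adj_mem hT hadj ha.1).trans ih

lemma first_cut {U : Finset (Sym2 V)} {T : SimpleGraph V} (hT : T.IsTree) {r v : V}
    (h : ¬ (GUg U).Reachable v r) :
    ∃ x y, (GUg U).Reachable v x ∧ T.Adj x y ∧ s(x, y) ∉ U ∧
      mu hT U r v = mu hT U r y + 1 := by
  suffices H : ∀ {v : V} (p : T.Walk v r), p.IsPath →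
      (∀ e ∈ p.edges, e ∈ U) ∨ ∃ x y, (GUg U).Reachable v x ∧ T.Adj x y ∧ s(x, y) ∉ U ∧
        cutlen U p = mu hT U r y + 1 by
    rcases H (tpath hT v r) (tpath_isPath hT v r) with h1 | ⟨x, y, h1, h2, h3, h4⟩
    · exact absurd (reachable_of_all_edges_mem _ h1) h
    · exact ⟨x, y, h1, h2, h3, h4⟩
  clear h
  intro v p hp
  induction p with
  | nil => exact Or.inl (by simp)
  | @cons a b _ ha q ih =>
    by_cases hab : s(a, b) ∈ U
    · rcases ih (hp.of_cons) with h1 | ⟨x, y, h1, h2, h3, h4⟩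
      · refine Or.inl ?_
        intro e he
        rcases (by simpa using he : e = s(a,b) ∨ e ∈ q.edges) with rfl | h'
        exacts [hab, h1 e h']
      · refine Or.inr ⟨x, y, Reachable.trans (Adj.reachable (GUg_adj.2 ⟨hab, ha.ne⟩)) h1,
          h2, h3, ?_⟩
        rw [cutlen_cons, if_pos hab, zero_add, h4]
    · refine Or.inr ⟨a, b, Reachable.refl _, ha, hab, ?_⟩
      rw [cutlen_cons, if_neg hab, add_comm, mu]
      congr 2
      exact tpath_unique hT _ hp.of_cons

/-- `U` is a good forest for `A`: every vertex sees exactly one vertex of `A`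
in its `U`-component. -/
def Good (T : SimpleGraph V) (A : Finset V) (U : Finset (Sym2 V)) : Prop :=
  ↑U ⊆ T.edgeSet ∧ ∀ v : V, ∃ a, a ∈ A ∧ (GUg U).Reachable v a ∧
    ∀ a' ∈ A, (GUg U).Reachable v a' → a' = a

lemma mkq_eq {A : Set V} {u v : V} :
    Quotient.mk (contractSetoid A) u = Quotient.mk (contractSetoid A) v ↔
      (u = v ∨ (u ∈ A ∧ v ∈ A)) := by
  constructor
  · intro h; exact Quotient.eq''.mp h
  · intro h; exact Quotient.sound h

lemma tpath_edges_subset_of_reachable {T : SimpleGraph V} (hT : T.IsTree)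
    {U : Finset (Sym2 V)} (hU : ↑U ⊆ T.edgeSet) {v w : V}
    (h : (GUg U).Reachable v w) : ∀ e ∈ (tpath hT v w).edges, e ∈ U := by
  obtain ⟨p⟩ := h
  have hle : GUg U ≤ T := by
    intro x y hxy
    rw [GUg_adj] at hxy
    have := hU hxy.1; rwa [mem_edgeSet] at this
  have hmem : ∀ e ∈ (p.mapLe hle).edges, e ∈ U := by
    intro e he
    rw [Walk.edges_map] at he
    obtain ⟨e', he', rfl⟩ := List.mem_map.mp he
    have h2 := p.edges_subset_edgeSet he'
    rw [GUg, edgeSet_fromEdgeSet] at h2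
    have h1 : Sym2.map (⇑(Hom.ofLE hle)) e' = e' := by
      induction e' using Sym2.ind with
      | _ x y => simp
    rw [h1]
    simpa using h2.1
  have hbp : ∀ e ∈ (p.mapLe hle).bypass.edges, e ∈ U :=
    fun e he => hmem e (Walk.edges_bypass_subset _ he)
  rwa [tpath_unique hT _ (Walk.bypass_isPath _)] at hbp

lemma getVert_one_spec {G : SimpleGraph V} {v w : V} (p : G.Walk v w) (hnil : ¬ p.Nil) :
    s(v, p.getVert 1) ∈ p.edges ∧ G.Adj v (p.getVert 1) := by
  obtain ⟨u, hadj, q, rfl⟩ := Walk.not_nil_iff.mp hnil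
  exact ⟨by simp, by simpa using hadj⟩


lemma tpath_getVert_one_len {T : SimpleGraph V} (hT : T.IsTree) {a b t : V} (hat : a ≠ t)
    (h1 : (tpath hT a t).getVert 1 = b) :
    (tpath hT a t).length = (tpath hT b t).length + 1 := by
  obtain ⟨u, hadj, q, hq⟩ := Walk.not_nil_iff.mp (Walk.not_nil_of_ne (p := tpath hT a t) hat)
  have hub : u = b := by rw [hq] at h1; simpa using h1
  subst hub
  have hqp : q.IsPath := by
    have := tpath_isPath hT a t; rw [hq] at this; exact this.of_cons
  rw [hq, Walk.length_cons, tpath_unique hT q hqp]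

lemma overlaps_of_good [Fintype V] {T : SimpleGraph V} [Fintype T.edgeSet] (hT : T.IsTree) {A : Finset V}
    (hA : A.Nonempty) {U : Finset (Sym2 V)} (hU : Good T A U) :
    Overlaps T ↑A (T.edgeFinset \ U) := by
  classical
  obtain ⟨a0, ha0⟩ := hA
  obtain ⟨hUT, hGood⟩ := hU
  choose av haA hreach huniq using hGood
  -- basic facts
  have hle : GUg U ≤ T := by
    intro x y hxy
    rw [GUg_adj] at hxy
    have := hUT hxy.1; rwa [mem_edgeSet] at this
  have hfix : ∀ a ∈ A, av a = a := fun a ha => (huniq a a ha (Reachable.refl _)).symm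
  have hsame : ∀ {x y : V}, (GUg U).Reachable x y → av x = av y := by
    intro x y h
    exact (huniq x (av y) (haA y) (h.trans (hreach y))).symm
  have hAuniq : ∀ {a a' : V}, a ∈ A → a' ∈ A → (GUg U).Reachable a a' → a = a' := by
    intro a a' ha ha' h
    have := hsame h
    rw [hfix a ha, hfix a' ha'] at this
    exact this
  have hadjU : ∀ {x y : V}, s(x, y) ∈ U → (GUg U).Adj x y := by
    intro x y h
    have : T.Adj x y := by have := hUT h; rwa [mem_edgeSet] at this
    exact GUg_adj.2 ⟨h, this.ne⟩
  have hnotboth : ∀ {x y : V}, s(x, y) ∈ U → ¬(x ∈ A ∧ y ∈ A) := by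
    rintro x y h ⟨hx, hy⟩
    exact (hadjU h).ne (hAuniq hx hy (hadjU h).reachable)
  -- the graph with the edges deleted is the graph with edge set U
  have hgraph : T.deleteEdges ↑(T.edgeFinset \ U) = GUg U := by
    ext x y
    rw [deleteEdges_adj, GUg_adj]
    constructor
    · rintro ⟨hadj, hmem⟩
      refine ⟨?_, hadj.ne⟩
      by_contra hxy
      exact hmem (by simp [hxy, hadj])
    · rintro ⟨hmem, hne⟩
      have : T.Adj x y := by have := hUT hmem; rwa [mem_edgeSet] at this
      exact ⟨this, by simp [hmem]⟩
  rw [Overlaps, hgraph]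
  set Q := contract (GUg U) ↑A with hQ
  have mkstep : ∀ {x y : V}, (GUg U).Adj x y → Q.Adj (Quotient.mk (contractSetoid ↑A) x)
      (Quotient.mk (contractSetoid ↑A) y) := by
    intro x y h
    rw [hQ]
    refine ⟨?_, x, y, rfl, rfl, h⟩
    intro heq
    rcases mkq_eq.mp heq with rfl | ⟨hx, hy⟩
    · exact h.ne rfl
    · exact hnotboth (GUg_adj.mp h).1 ⟨by simpa using hx, by simpa using hy⟩
  have mkreach : ∀ {x y : V}, (GUg U).Reachable x y → Q.Reachable
      (Quotient.mk (contractSetoid ↑A) x) (Quotient.mk (contractSetoid ↑A) y) := by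
    intro x y h
    obtain ⟨p⟩ := h
    induction p with
    | nil => exact Reachable.refl _
    | cons ha p ih => exact ((mkstep ha).reachable).trans ih
  have hconn : Q.Connected := by
    have : Nonempty (Quotient (contractSetoid (↑A : Set V))) := ⟨Quotient.mk _ a0⟩
    refine Connected.mk ?_
    intro q q'
    induction q using Quotient.ind with | _ x =>
    induction q' using Quotient.ind with | _ y =>
    refine (mkreach (hreach x)).trans ?_ |>.trans (mkreach (hreach y)).symm
    rw [Quotient.sound (Or.inr ⟨by simpa using haA x, by simpa using haA y⟩ :
      (contractSetoid (↑A : Set V)).r (av x) (av y))]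
  -- cardinality of the quotient
  have e1 : Quotient (contractSetoid (↑A : Set V)) ≃ Option {v : V // v ∈ Aᶜ} := by
    refine ⟨Quotient.lift (fun v => if h : v ∈ A then none else some ⟨v, Finset.mem_compl.2 h⟩)
      ?_, fun o => Option.elim o (Quotient.mk _ a0) (fun v => Quotient.mk _ v.1), ?_, ?_⟩
    · rintro x y (rfl | ⟨hx, hy⟩)
      · rfl
      · rw [dif_pos (show x ∈ A by simpa using hx), dif_pos (show y ∈ A by simpa using hy)]
    · intro q
      induction q using Quotient.ind with | _ v =>
      by_cases h : v ∈ A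
      · simp only [Quotient.lift_mk, dif_pos h, Option.elim]
        exact Quotient.sound (Or.inr ⟨by simpa using ha0, by simpa using h⟩)
      · simp only [Quotient.lift_mk, dif_neg h, Option.elim]
    · rintro (_ | ⟨v, hv⟩)
      · simp [dif_pos ha0]
      · simp [dif_neg (Finset.mem_compl.1 hv)]
  have hcardV : Fintype.card (Quotient (contractSetoid (↑A : Set V))) = Aᶜ.card + 1 := by
    rw [Fintype.card_congr e1, Fintype.card_option, Fintype.card_coe]
  -- |U| = |Aᶜ|
  have hcardU : Aᶜ.card = U.card := by
    have hne : ∀ v : V, v ∉ A → v ≠ av v := fun v hv h => hv (h ▸ haA v)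
    have hmemU : ∀ v : V, v ∉ A → s(v, (tpath hT v (av v)).getVert 1) ∈ U := by
      intro v hv
      exact (tpath_edges_subset_of_reachable hT hUT (hreach v)) _
        ((getVert_one_spec _ (Walk.not_nil_of_ne (hne v hv))).1)
    refine Finset.card_bij (fun v _ => s(v, (tpath hT v (av v)).getVert 1)) ?_ ?_ ?_
    · intro v hv
      exact hmemU v (Finset.mem_compl.1 hv)
    · intro a ha b hb heq
      rw [Sym2.eq_iff] at heq
      rcases heq with ⟨rfl, _⟩ | ⟨h1, h2⟩
      · rfl
      · exfalso
        have haU := hmemU a (Finset.mem_compl.1 ha)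
        rw [h2] at haU
        have hteq : av a = av b := hsame (hadjU haU).reachable
        have l1 := tpath_getVert_one_len hT (hne a (Finset.mem_compl.1 ha)) h2
        have l2 := tpath_getVert_one_len hT (hne b (Finset.mem_compl.1 hb)) h1.symm
        rw [hteq] at l1
        omega
    · intro e he
      induction e using Sym2.ind with | _ x y =>
      have Tadj : T.Adj x y := by have := hUT he; rwa [mem_edgeSet] at this
      have hteq : av x = av y := hsame (hadjU he).reachable
      by_cases hxA : x ∈ A
      · have hyA : y ∉ A := fun hyA => hnotboth he ⟨hxA, hyA⟩
        refine ⟨y, Finset.mem_compl.2 hyA, ?_⟩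
        have havy : av y = x := by rw [← hteq, hfix x hxA]
        show s(y, (tpath hT y (av y)).getVert 1) = s(x, y)
        rw [havy, ← tpath_unique hT (Walk.cons Tadj.symm Walk.nil) (Path.singleton Tadj.symm).2]
        simp [Sym2.eq_swap]
      · by_cases hyA : y ∈ A
        · refine ⟨x, Finset.mem_compl.2 hxA, ?_⟩
          have havx : av x = y := by rw [hteq, hfix y hyA]
          show s(x, (tpath hT x (av x)).getVert 1) = s(x, y)
          rw [havx, ← tpath_unique hT (Walk.cons Tadj Walk.nil) (Path.singleton Tadj).2]
          simp
        · by_cases hysup : y ∈ (tpath hT x (av x)).support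
          · refine ⟨x, Finset.mem_compl.2 hxA, ?_⟩
            have htakep : ((tpath hT x (av x)).takeUntil y hysup).IsPath :=
              (tpath_isPath hT x (av x)).takeUntil hysup
            have htake : (tpath hT x (av x)).takeUntil y hysup = Walk.cons Tadj Walk.nil :=
              (tpath_unique hT _ htakep).trans
                (tpath_unique hT (Walk.cons Tadj Walk.nil) (Path.singleton Tadj).2).symm
            have hspec := (tpath hT x (av x)).take_spec hysup
            rw [htake] at hspec
            show s(x, (tpath hT x (av x)).getVert 1) = s(x, y)
            rw [← hspec]
            simp
          · refine ⟨y, Finset.mem_compl.2 hyA, ?_⟩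
            have hcons : (Walk.cons Tadj.symm (tpath hT x (av x))).IsPath := by
              rw [Walk.cons_isPath_iff]
              exact ⟨tpath_isPath hT x (av x), hysup⟩
            show s(y, (tpath hT y (av y)).getVert 1) = s(x, y)
            rw [← hteq, ← tpath_unique hT _ hcons]
            simp [Sym2.eq_swap]
  -- the edge count of the quotient graph
  have hedgecard : U.card = Q.edgeFinset.card := by
    have aux : ∀ {x y x' y' : V}, s(x, y) ∈ U → s(x', y') ∈ U →
        (Quotient.mk (contractSetoid (↑A : Set V)) x = Quotient.mk (contractSetoid ↑A) x') →
        (Quotient.mk (contractSetoid (↑A : Set V)) y = Quotient.mk (contractSetoid ↑A) y') →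
        s(x, y) = s(x', y') := by
      intro x y x' y' hxy hxy' hx hy
      rcases mkq_eq.mp hx with rfl | ⟨hxA, hx'A⟩
      · rcases mkq_eq.mp hy with rfl | ⟨hyA, hy'A⟩
        · rfl
        · have : y = y' := hAuniq (by simpa using hyA) (by simpa using hy'A)
            (((hadjU hxy).symm.reachable).trans (hadjU hxy').reachable)
          rw [this]
      · rcases mkq_eq.mp hy with rfl | ⟨hyA, hy'A⟩
        · have : x = x' := hAuniq (by simpa using hxA) (by simpa using hx'A)
            (((hadjU hxy).reachable).trans (hadjU hxy').symm.reachable)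
          rw [this]
        · exact absurd ⟨by simpa using hxA, by simpa using hyA⟩ (hnotboth hxy)
    refine Finset.card_bij
      (fun e _ => Sym2.map (Quotient.mk (contractSetoid (↑A : Set V))) e) ?_ ?_ ?_
    · intro e he
      induction e using Sym2.ind with | _ x y =>
      simp only [Sym2.map_pair_eq, mem_edgeFinset, mem_edgeSet]
      exact mkstep (hadjU he)
    · intro e1 he1 e2 he2 heq
      induction e1 using Sym2.ind with | _ x y =>
      induction e2 using Sym2.ind with | _ x' y' =>
      simp only [Sym2.map_pair_eq, Sym2.eq_iff] at heq
      rcases heq with ⟨h1, h2⟩ | ⟨h1, h2⟩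
      · exact aux he1 he2 h1 h2
      · rw [Sym2.eq_swap] at he2
        exact (aux he1 he2 h1 h2).trans (Sym2.eq_swap)
    · intro e he
      rw [mem_edgeFinset] at he
      induction e using Sym2.ind with | _ q q' =>
      rw [mem_edgeSet, hQ] at he
      obtain ⟨hne, x, y, hx, hy, hadj⟩ := he
      exact ⟨s(x, y), (GUg_adj.mp hadj).1, by simp only [Sym2.map_pair_eq, hx, hy]⟩
  -- conclude
  exact isTree_of_connected_of_card Q hconn (by rw [← hedgecard, ← hcardU, hcardV])

lemma split_good [Fintype V] {T : SimpleGraph V} (hT : T.IsTree) {A B : Finset V}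
    {r : V} (hrA : r ∈ A) (hrB : r ∈ B) {U : Finset (Sym2 V)}
    (hU : Good T (A ∪ B) U) :
    ∃ UA UB : Finset (Sym2 V), Good T A UA ∧ Good T B UB ∧ UA ∩ UB ⊆ U := by
  classical
  obtain ⟨hUT, hGood⟩ := hU
  choose l hlW hlreach hluniq using hGood
  have hfix : ∀ w ∈ A ∪ B, l w = w := fun w hw => (hluniq w w hw (Reachable.refl _)).symm
  have hsame : ∀ {x y : V}, (GUg U).Reachable x y → l x = l y := by
    intro x y h
    exact (hluniq x (l y) (hlW y) (h.trans (hlreach y))).symm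
  have hnreach : ∀ v ∈ A ∪ B, v ≠ r → ¬ (GUg U).Reachable v r := by
    intro v hv hne h
    have h1 : l v = v := hfix v hv
    have h2 : l v = l r := hsame h
    rw [hfix r (Finset.mem_union_left _ hrA)] at h2
    exact hne (h1.symm.trans h2)
  have hcut : ∀ v : V, ∃ p : V × V, ¬(GUg U).Reachable v r →
      ((GUg U).Reachable v p.1 ∧ T.Adj p.1 p.2 ∧ s(p.1, p.2) ∉ U ∧
        mu hT U r v = mu hT U r p.2 + 1) := by
    intro v
    by_cases h : (GUg U).Reachable v r
    · exact ⟨(v, v), fun h' => absurd h h'⟩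
    · obtain ⟨x, y, h1, h2, h3, h4⟩ := first_cut hT h
      exact ⟨(x, y), fun _ => ⟨h1, h2, h3, h4⟩⟩
  choose f hf using hcut
  have main : ∀ A' B' : Finset V, A' ∪ B' = A ∪ B → r ∈ A' →
      Good T A' (U ∪ (B' \ A').image (fun v => s((f v).1, (f v).2))) := by
    intro A' B' hun hrA'
    set UA : Finset (Sym2 V) := U ∪ (B' \ A').image (fun v => s((f v).1, (f v).2)) with hUA
    have hspec : ∀ v ∈ B' \ A', (GUg U).Reachable v (f v).1 ∧ T.Adj (f v).1 (f v).2 ∧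
        s((f v).1, (f v).2) ∉ U ∧ mu hT U r v = mu hT U r (f v).2 + 1 := by
      intro v hv
      rw [Finset.mem_sdiff] at hv
      refine hf v (hnreach v ?_ ?_)
      · rw [← hun]; exact Finset.mem_union_right _ hv.1
      · rintro rfl; exact hv.2 hrA'
    have hUAT : ↑UA ⊆ T.edgeSet := by
      intro e he
      rw [hUA] at he
      simp only [Finset.coe_union, Set.mem_union, Finset.coe_image, Set.mem_image,
        Finset.mem_coe] at he
      rcases he with he | ⟨v, hv, rfl⟩
      · exact hUT he
      · rw [mem_edgeSet]; exact (hspec v hv).2.1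
    have hmono : ∀ {x y : V}, (GUg U).Reachable x y → (GUg UA).Reachable x y := by
      intro x y h
      refine h.mono ?_
      apply fromEdgeSet_mono
      rw [hUA]; simp
    -- the iterated A'-root map
    let psi : ℕ → V → V := fun n => Nat.rec id (fun _ ih w =>
      if w ∈ A' then w else ih (l (f w).2)) n
    have psi_succ : ∀ n w, psi (n + 1) w = if w ∈ A' then w else psi n (l (f w).2) :=
      fun n w => rfl
    let Psi : V → V := fun w => psi (mu hT U r w + 1) w
    have hmem' : ∀ w ∈ A ∪ B, w ∉ A' → w ∈ B' \ A' := by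
      intro w hw hwA
      rw [Finset.mem_sdiff]
      rw [← hun] at hw
      rcases Finset.mem_union.mp hw with h | h
      · exact absurd h hwA
      · exact ⟨h, hwA⟩
    have hmudec : ∀ w, w ∈ A ∪ B → w ∉ A' → mu hT U r (l (f w).2) + 1 = mu hT U r w ∧
        l (f w).2 ∈ A ∪ B := by
      intro w hw hwA
      obtain ⟨h1, h2, h3, h4⟩ := hspec w (hmem' w hw hwA)
      have : mu hT U r (f w).2 = mu hT U r (l (f w).2) :=
        mu_reachable hT hUT (hlreach (f w).2)
      exact ⟨by omega, hlW _⟩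
    have stab : ∀ n w, w ∈ A ∪ B → mu hT U r w < n → psi n w = Psi w := by
      intro n
      induction n using Nat.strong_induction_on with | _ n ih =>
      intro w hw hmu
      match n, hmu with
      | (n + 1), hmu =>
      by_cases hwA : w ∈ A'
      · rw [psi_succ, if_pos hwA]
        show _ = psi (mu hT U r w + 1) w
        rw [psi_succ, if_pos hwA]
      · obtain ⟨hdec, hmem⟩ := hmudec w hw hwA
        rw [psi_succ, if_neg hwA]
        have e1 : psi n (l (f w).2) = Psi (l (f w).2) := by
          rcases Nat.eq_or_lt_of_le (Nat.le_of_lt_succ hmu) with h | h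
          · exact ih n (Nat.lt_succ_self n) _ hmem (by omega)
          · exact ih n (Nat.lt_succ_self n) _ hmem (by omega)
        have e2 : Psi w = Psi (l (f w).2) := by
          show psi (mu hT U r w + 1) w = _
          rw [psi_succ, if_neg hwA]
          exact ih (mu hT U r w) (by omega) _ hmem (by omega)
        rw [e1, ← e2]
    have good : ∀ n w, w ∈ A ∪ B → mu hT U r w < n →
        Psi w ∈ A' ∧ (GUg UA).Reachable w (Psi w) := by
      intro n
      induction n using Nat.strong_induction_on with | _ n ih =>
      intro w hw hmu
      match n, hmu with
      | (n + 1), hmu =>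
      by_cases hwA : w ∈ A'
      · have : Psi w = w := by
          show psi (mu hT U r w + 1) w = w
          rw [psi_succ, if_pos hwA]
        rw [this]
        exact ⟨hwA, Reachable.refl _⟩
      · obtain ⟨hdec, hmem⟩ := hmudec w hw hwA
        obtain ⟨h1, h2, h3, h4⟩ := hspec w (hmem' w hw hwA)
        have ePsi : Psi w = Psi (l (f w).2) := by
          show psi (mu hT U r w + 1) w = _
          rw [psi_succ, if_neg hwA]
          exact stab (mu hT U r w) _ hmem (by omega)
        have hlt : mu hT U r (l (f w).2) < n := by omega
        obtain ⟨hA, hR⟩ := ih n (Nat.lt_succ_self n) _ hmem hlt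
        rw [ePsi]
        refine ⟨hA, ?_⟩
        have r1 : (GUg UA).Reachable w (f w).1 := hmono h1
        have r2 : (GUg UA).Adj (f w).1 (f w).2 := by
          rw [GUg_adj]
          constructor
          · rw [hUA]
            refine Finset.mem_union_right _ ?_
            exact Finset.mem_image.2 ⟨w, hmem' w hw hwA, rfl⟩
          · exact h2.ne
        have r3 : (GUg UA).Reachable (f w).2 (l (f w).2) := hmono (hlreach _)
        exact ((r1.trans r2.reachable).trans r3).trans hR
    have hPsiA : ∀ w ∈ A ∪ B, Psi w ∈ A' ∧ (GUg UA).Reachable w (Psi w) :=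
      fun w hw => good (mu hT U r w + 1) w hw (Nat.lt_succ_self _)
    have hPsifix : ∀ a ∈ A', Psi a = a := by
      intro a ha
      show psi (mu hT U r a + 1) a = a
      rw [psi_succ, if_pos ha]
    -- the invariant function
    let Phi : V → V := fun v => Psi (l v)
    have hPhiadj : ∀ {v v' : V}, (GUg UA).Adj v v' → Phi v = Phi v' := by
      have key : ∀ u ∈ B' \ A', Phi (f u).1 = Phi (f u).2 := by
        intro u hu
        obtain ⟨h1, h2, h3, h4⟩ := hspec u hu
        have huW : u ∈ A ∪ B := by
          rw [← hun]
          exact Finset.mem_union_right _ (Finset.mem_sdiff.mp hu).1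
        have e0 : l (f u).1 = u := by
          rw [← hsame h1, hfix u huW]
        show Psi (l (f u).1) = Psi (l (f u).2)
        rw [e0]
        show psi (mu hT U r u + 1) u = _
        rw [psi_succ, if_neg (Finset.mem_sdiff.mp hu).2]
        obtain ⟨hdec, hmem⟩ := hmudec u huW (Finset.mem_sdiff.mp hu).2
        exact stab (mu hT U r u) _ hmem (by omega)
      intro v v' hadj
      rw [GUg_adj] at hadj
      obtain ⟨hmem, hne⟩ := hadj
      rw [hUA, Finset.mem_union] at hmem
      rcases hmem with hmem | hmem
      · show Psi (l v) = Psi (l v')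
        rw [hsame (Adj.reachable (GUg_adj.2 ⟨hmem, hne⟩))]
      · obtain ⟨u, hu, heq⟩ := Finset.mem_image.mp hmem
        rw [Sym2.eq_iff] at heq
        rcases heq with ⟨h1, h2⟩ | ⟨h1, h2⟩
        · rw [← h1, ← h2]; exact key u hu
        · rw [← h1, ← h2]; exact (key u hu).symm
    have hconst : ∀ {x y : V}, (GUg UA).Reachable x y → Phi x = Phi y := by
      intro x y h
      obtain ⟨p⟩ := h
      induction p with
      | nil => rfl
      | cons ha p ih => exact (hPhiadj ha).trans ih
    refine ⟨hUAT, fun v => ⟨Phi v, ?_, ?_, ?_⟩⟩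
    · exact (hPsiA (l v) (hlW v)).1
    · exact (hmono (hlreach v)).trans (hPsiA (l v) (hlW v)).2
    · intro a' ha' hreach'
      have h1 : Phi a' = Phi v := hconst hreach'.symm
      have h2 : Phi a' = a' := by
        show Psi (l a') = a'
        rw [hfix a' (by rw [← hun]; exact Finset.mem_union_left _ ha'), hPsifix a' ha']
      rw [← h2, h1]
  have hGA := main A B rfl hrA
  have hGB := main B A (Finset.union_comm B A) hrB
  refine ⟨_, _, hGA, hGB, ?_⟩
  intro e he
  rw [Finset.mem_inter] at he
  obtain ⟨heA, heB⟩ := he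
  rcases Finset.mem_union.mp heA with h | heA'
  · exact h
  rcases Finset.mem_union.mp heB with h | heB'
  · exact h
  exfalso
  obtain ⟨u, hu, hequ⟩ := Finset.mem_image.mp heA'
  obtain ⟨w, hw, heqw⟩ := Finset.mem_image.mp heB'
  rw [Finset.mem_sdiff] at hu hw
  have huW : u ∈ A ∪ B := Finset.mem_union_right _ hu.1
  have hwW : w ∈ A ∪ B := Finset.mem_union_left _ hw.1
  have hfu := hf u (hnreach u huW (by rintro rfl; exact hu.2 hrA))
  have hfw := hf w (hnreach w hwW (by rintro rfl; exact hw.2 hrB))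
  have heq : s((f u).1, (f u).2) = s((f w).1, (f w).2) := hequ.trans heqw.symm
  rw [Sym2.eq_iff] at heq
  have eu : l (f u).1 = u := by rw [← hsame hfu.1, hfix u huW]
  have ew : l (f w).1 = w := by rw [← hsame hfw.1, hfix w hwW]
  rcases heq with ⟨h1, h2⟩ | ⟨h1, h2⟩
  · rw [← h1] at ew
    rw [eu] at ew
    rw [ew] at hu
    exact hu.2 hw.1
  · have mx : mu hT U r u = mu hT U r (f u).1 := mu_reachable hT hUT hfu.1
    have my : mu hT U r w = mu hT U r (f w).1 := mu_reachable hT hUT hfw.1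
    have m1 := hfu.2.2.2
    have m2 := hfw.2.2.2
    rw [h1] at mx
    rw [h2] at m1
    omega

/-- Union of a list of finsets. -/
def unionF : List (Finset V) → Finset V := fun L => L.foldr (· ∪ ·) ∅

/-- A chain condition: every entry meets the union of the later entries. -/
def goodChain : List (Finset V) → Prop
  | [] => True
  | A :: L => (L = [] ∨ (A ∩ unionF L).Nonempty) ∧ goodChain L

lemma subset_unionF {L : List (Finset V)} {A : Finset V} (h : A ∈ L) : A ⊆ unionF L := by
  induction L with
  | nil => simp at h
  | cons B L ih =>
    rcases List.mem_cons.mp h with rfl | h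
    · exact fun x hx => Finset.mem_union_left _ hx
    · exact fun x hx => Finset.mem_union_right _ (ih h hx)

lemma exists_chain [Fintype V] [Nontrivial V] {𝓔 : Finset (Finset V)}
    (hconn : (fromRel fun x y => ∃ A ∈ 𝓔, x ∈ A ∧ y ∈ A).Connected) :
    ∃ L : List (Finset V), L.Nodup ∧ (∀ A ∈ L, A ∈ 𝓔 ∧ A.Nonempty) ∧ goodChain L ∧
      unionF L = Finset.univ := by
  classical
  -- there is a nonempty hyperedge
  obtain ⟨x₀, y₀, hxy⟩ := exists_pair_ne V
  have hA0 : ∃ A ∈ 𝓔, A.Nonempty := by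
    obtain ⟨p⟩ := hconn.preconnected x₀ y₀
    have hnp : ¬ p.Nil := Walk.not_nil_of_ne hxy
    obtain ⟨u, hadj, q, rfl⟩ := Walk.not_nil_iff.mp hnp
    rw [fromRel_adj] at hadj
    rcases hadj.2 with ⟨A, hA, hx, _⟩ | ⟨A, hA, hx, _⟩
    · exact ⟨A, hA, ⟨_, hx⟩⟩
    · exact ⟨A, hA, ⟨_, hx⟩⟩
  obtain ⟨A0, hA0E, hA0ne⟩ := hA0
  -- extension step
  have hext : ∀ L : List (Finset V), (∀ A ∈ L, A ∈ 𝓔 ∧ A.Nonempty) → L ≠ [] →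
      unionF L ≠ Finset.univ → ∃ A₁ ∈ 𝓔, A₁ ∉ L ∧ (A₁ ∩ unionF L).Nonempty ∧
        ¬ (A₁ ⊆ unionF L) := by
    intro L hL hne hnuniv
    have hWne : (unionF L).Nonempty := by
      obtain ⟨A, L', rfl⟩ := List.exists_cons_of_ne_nil hne
      obtain ⟨a, ha⟩ := (hL A (by simp)).2
      exact ⟨a, Finset.mem_union_left _ ha⟩
    obtain ⟨x, hx⟩ := hWne
    have : ∃ y, y ∉ unionF L := by
      by_contra h
      push_neg at h
      exact hnuniv (Finset.eq_univ_iff_forall.2 h)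
    obtain ⟨y, hy⟩ := this
    obtain ⟨p⟩ := hconn.preconnected x y
    obtain ⟨d, _, hd1, hd2⟩ := p.exists_boundary_dart (↑(unionF L) : Set V)
      (by simpa using hx) (by simpa using hy)
    have hadj := d.adj
    rw [fromRel_adj] at hadj
    have : ∃ A ∈ 𝓔, d.fst ∈ A ∧ d.snd ∈ A := by
      rcases hadj.2 with ⟨A, hA, h1, h2⟩ | ⟨A, hA, h1, h2⟩
      · exact ⟨A, hA, h1, h2⟩
      · exact ⟨A, hA, h2, h1⟩
    obtain ⟨A₁, hA₁E, hf, hs⟩ := this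
    have hnotsub : ¬ (A₁ ⊆ unionF L) := by
      intro h
      exact (by simpa using hd2 : d.snd ∉ unionF L) (h hs)
    refine ⟨A₁, hA₁E, fun hmem => hnotsub (subset_unionF hmem), ⟨d.fst, ?_⟩, hnotsub⟩
    rw [Finset.mem_inter]
    exact ⟨hf, by simpa using hd1⟩
  -- iterate
  suffices H : ∀ n (L : List (Finset V)), 𝓔.card - L.length ≤ n → L.Nodup →
      (∀ A ∈ L, A ∈ 𝓔 ∧ A.Nonempty) → goodChain L → L ≠ [] →
      ∃ L' : List (Finset V), L'.Nodup ∧ (∀ A ∈ L', A ∈ 𝓔 ∧ A.Nonempty) ∧ goodChain L' ∧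
        unionF L' = Finset.univ by
    refine H 𝓔.card [A0] ?_ ?_ ?_ ⟨Or.inl rfl, trivial⟩ (by simp)
    · omega
    · simp
    · intro A hA
      rw [List.mem_singleton] at hA
      exact hA ▸ ⟨hA0E, hA0ne⟩
  intro n
  induction n with
  | zero =>
    intro L hcard hnd hmem hgc hne
    by_cases huniv : unionF L = Finset.univ
    · exact ⟨L, hnd, hmem, hgc, huniv⟩
    · exfalso
      obtain ⟨A₁, hA₁E, hA₁L, _, _⟩ := hext L hmem hne huniv
      have hsub : L.toFinset ⊆ 𝓔 := by
        intro A hA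
        exact (hmem A (List.mem_toFinset.mp hA)).1
      have hlen : L.length ≤ 𝓔.card := by
        rw [← List.toFinset_card_of_nodup hnd]
        exact Finset.card_le_card hsub
      have : L.toFinset = 𝓔 := Finset.eq_of_subset_of_card_le hsub (by
        rw [List.toFinset_card_of_nodup hnd]; omega)
      rw [← this] at hA₁E
      exact hA₁L (List.mem_toFinset.mp hA₁E)
  | succ n ih =>
    intro L hcard hnd hmem hgc hne
    by_cases huniv : unionF L = Finset.univ
    · exact ⟨L, hnd, hmem, hgc, huniv⟩
    · obtain ⟨A₁, hA₁E, hA₁L, hint, hnsub⟩ := hext L hmem hne huniv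
      have hA₁ne : A₁.Nonempty := by
        obtain ⟨a, ha⟩ := hint
        exact ⟨a, (Finset.mem_inter.mp ha).1⟩
      refine ih (A₁ :: L) (by simp; omega) (by rw [List.nodup_cons]; exact ⟨hA₁L, hnd⟩) ?_
        ⟨Or.inr hint, hgc⟩ (by simp)
      intro A hA
      rcases List.mem_cons.mp hA with rfl | hA
      · exact ⟨hA₁E, hA₁ne⟩
      · exact hmem A hA

lemma chain_rec [Fintype V] {T : SimpleGraph V} (hT : T.IsTree) (L : List (Finset V)) :
    goodChain L → L ≠ [] → ∀ U : Finset (Sym2 V), Good T (unionF L) U →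
    ∃ us : List (Finset (Sym2 V)), List.Forall₂ (fun A u => Good T A u) L us ∧
      ∀ e : Sym2 V, (∀ u ∈ us, e ∈ u) → e ∈ U := by
  induction L with
  | nil => intro _ h; exact absurd rfl h
  | cons A L' ih =>
    intro hgc _ U hGood
    obtain ⟨hor, hgc'⟩ := hgc
    by_cases hL' : L' = []
    · subst hL'
      have hAe : unionF [A] = A := by simp [unionF]
      rw [hAe] at hGood
      exact ⟨[U], List.Forall₂.cons hGood List.Forall₂.nil, fun e he => he U (by simp)⟩
    · obtain ⟨r, hr⟩ := hor.resolve_left hL'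
      rw [Finset.mem_inter] at hr
      have hGood' : Good T (A ∪ unionF L') U := hGood
      obtain ⟨UA, UB, hGA, hGB, hsub⟩ := split_good hT hr.1 hr.2 hGood'
      obtain ⟨us', hf2, hint⟩ := ih hgc' hL' UB hGB
      refine ⟨UA :: us', List.Forall₂.cons hGA hf2, ?_⟩
      intro e he
      exact hsub (Finset.mem_inter.2 ⟨he UA (by simp),
        hint e (fun u hu => he u (by simp [hu]))⟩)

lemma sum_le_list_sum (c : Sym2 V → ℝ) (hc : ∀ e, 0 ≤ c e) (F : Finset (Sym2 V)) :
    ∀ ss : List (Finset (Sym2 V)), (∀ e ∈ F, ∃ s ∈ ss, e ∈ s) →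
    ∑ e ∈ F, c e ≤ (ss.map (fun s => ∑ e ∈ s, c e)).sum := by
  classical
  intro ss
  induction ss generalizing F with
  | nil =>
    intro hcov
    have : F = ∅ := by
      rw [Finset.eq_empty_iff_forall_notMem]
      intro e he
      obtain ⟨s, hs, _⟩ := hcov e he
      simp at hs
    simp [this]
  | cons s ss' ih =>
    intro hcov
    have h1 : ∑ e ∈ F, c e = ∑ e ∈ F ∩ s, c e + ∑ e ∈ F \ s, c e :=
      (Finset.sum_inter_add_sum_sdiff F s c).symm
    have h2 : ∑ e ∈ F ∩ s, c e ≤ ∑ e ∈ s, c e :=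
      Finset.sum_le_sum_of_subset_of_nonneg Finset.inter_subset_right
        (fun e _ _ => hc e)
    have h3 : ∑ e ∈ F \ s, c e ≤ (ss'.map (fun s => ∑ e ∈ s, c e)).sum := by
      refine ih _ ?_
      intro e he
      rw [Finset.mem_sdiff] at he
      obtain ⟨t, ht, het⟩ := hcov e he.1
      rcases List.mem_cons.mp ht with rfl | ht
      · exact absurd het he.2
      · exact ⟨t, ht, het⟩
    rw [List.map_cons, List.sum_cons, h1]
    linarith

omit [DecidableEq V] in
/-- Let `T` be a tree on `R` with nonnegative edge costs `c` and let
`(R, 𝓔)` be a connected hypergraph. For every hyperedge `A ∈ 𝓔` let `FA A` be a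
maximum-cost edge set of `T` overlapped by `A`. Then `∑_{A ∈ 𝓔} c(FA A) ≥ c(F)`. -/
theorem stmt_0 [Fintype V] (T : SimpleGraph V) (hT : T.IsTree)
    (c : Sym2 V → ℝ) (hc : ∀ e, 0 ≤ c e)
    (𝓔 : Finset (Finset V))
    (hconn : (SimpleGraph.fromRel (fun x y => ∃ A ∈ 𝓔, x ∈ A ∧ y ∈ A)).Connected)
    (FA : Finset V → Finset (Sym2 V))
    (hFA : ∀ A ∈ 𝓔, ↑(FA A) ⊆ T.edgeSet ∧ Overlaps T ↑A (FA A) ∧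
      ∀ F' : Finset (Sym2 V), ↑F' ⊆ T.edgeSet → Overlaps T ↑A F' →
        ∑ e ∈ F', c e ≤ ∑ e ∈ FA A, c e) :
    ∑ᶠ e ∈ T.edgeSet, c e ≤ ∑ A ∈ 𝓔, ∑ e ∈ FA A, c e := by
  classical
  rw [← coe_edgeFinset, finsum_mem_coe_finset]
  by_cases hE : T.edgeFinset = ∅
  · rw [hE, Finset.sum_empty]
    exact Finset.sum_nonneg fun A _ => Finset.sum_nonneg fun e _ => hc e
  · obtain ⟨e0, he0⟩ := Finset.nonempty_iff_ne_empty.2 hE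
    haveI hnt : Nontrivial V := by
      induction e0 using Sym2.ind with | _ x y =>
      rw [mem_edgeFinset, mem_edgeSet] at he0
      exact ⟨x, y, he0.ne⟩
    set 𝓔' := 𝓔.filter (fun A => A.Nonempty) with h𝓔'
    have hrel : ∀ a b : V, (∃ A ∈ 𝓔', a ∈ A ∧ b ∈ A) ↔ (∃ A ∈ 𝓔, a ∈ A ∧ b ∈ A) := by
      intro a b
      constructor
      · rintro ⟨A, hA, h1, h2⟩
        exact ⟨A, (Finset.mem_filter.mp hA).1, h1, h2⟩
      · rintro ⟨A, hA, h1, h2⟩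
        exact ⟨A, Finset.mem_filter.2 ⟨hA, ⟨a, h1⟩⟩, h1, h2⟩
    have hgeq : (fromRel fun x y => ∃ A ∈ 𝓔', x ∈ A ∧ y ∈ A) =
        (fromRel fun x y => ∃ A ∈ 𝓔, x ∈ A ∧ y ∈ A) := by
      ext x y
      rw [fromRel_adj, fromRel_adj, hrel x y, hrel y x]
    have hconn' : (fromRel fun x y => ∃ A ∈ 𝓔', x ∈ A ∧ y ∈ A).Connected := by
      rw [hgeq]; exact hconn
    obtain ⟨L, hnd, hmemL, hgc, huniv⟩ := exists_chain hconn'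
    have hLne : L ≠ [] := by
      rintro rfl
      have h1 : unionF ([] : List (Finset V)) = ∅ := rfl
      rw [h1] at huniv
      have h2 : (Finset.univ : Finset V).Nonempty := Finset.univ_nonempty
      rw [← huniv] at h2
      exact Finset.not_nonempty_empty h2
    have hGood0 : Good T (unionF L) (∅ : Finset (Sym2 V)) := by
      rw [huniv]
      refine ⟨by simp, fun v => ⟨v, Finset.mem_univ v, Reachable.refl _, ?_⟩⟩
      intro a' _ hr
      have hbot : GUg (∅ : Finset (Sym2 V)) = ⊥ := by
        rw [GUg, Finset.coe_empty, fromEdgeSet_empty]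
      rw [hbot] at hr
      obtain ⟨p⟩ := hr
      cases p with
      | nil => rfl
      | cons ha _ => simp at ha
    obtain ⟨us, hf2, hint⟩ := chain_rec hT L hgc hLne ∅ hGood0
    have hcov : ∀ e ∈ T.edgeFinset, ∃ s ∈ us.map (fun u => T.edgeFinset \ u), e ∈ s := by
      intro e he
      by_contra h
      push_neg at h
      have hall : ∀ u ∈ us, e ∈ u := by
        intro u hu
        have h2 := h (T.edgeFinset \ u) (List.mem_map_of_mem hu)
        rw [Finset.mem_sdiff] at h2
        push_neg at h2
        exact h2 he
      have := hint e hall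
      simp at this
    have step1 : ∑ e ∈ T.edgeFinset, c e ≤
        ((us.map (fun u => T.edgeFinset \ u)).map (fun s => ∑ e ∈ s, c e)).sum :=
      sum_le_list_sum c hc _ _ hcov
    rw [List.map_map] at step1
    have step2 : ∀ (L' : List (Finset V)) (us' : List (Finset (Sym2 V))),
        List.Forall₂ (fun A u => Good T A u) L' us' → (∀ A ∈ L', A ∈ 𝓔' ∧ A.Nonempty) →
        (us'.map (fun u => ∑ e ∈ T.edgeFinset \ u, c e)).sum ≤
          (L'.map (fun A => ∑ e ∈ FA A, c e)).sum := by
      intro L' us' h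
      induction h with
      | nil => intro; simp
      | @cons A u L'' us'' hg hrest ih =>
        intro hmem
        simp only [List.map_cons, List.sum_cons]
        have hA𝓔' := (hmem A (by simp)).1
        have hAne := (hmem A (by simp)).2
        have hA𝓔 : A ∈ 𝓔 := (Finset.mem_filter.mp hA𝓔').1
        have hov : Overlaps T ↑A (T.edgeFinset \ u) := overlaps_of_good hT hAne hg
        have hsub : ↑(T.edgeFinset \ u) ⊆ T.edgeSet := by
          intro e he
          rw [Finset.mem_coe, Finset.mem_sdiff] at he
          exact mem_edgeFinset.mp he.1
        have h1 := (hFA A hA𝓔).2.2 (T.edgeFinset \ u) hsub hov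
        have h2 := ih (fun B hB => hmem B (by simp [hB]))
        exact add_le_add h1 h2
    have step3 : (L.map (fun A => ∑ e ∈ FA A, c e)).sum ≤ ∑ A ∈ 𝓔, ∑ e ∈ FA A, c e := by
      rw [← List.sum_toFinset _ hnd]
      refine Finset.sum_le_sum_of_subset_of_nonneg ?_ ?_
      · intro A hA
        exact (Finset.mem_filter.mp (hmemL A (List.mem_toFinset.mp hA)).1).1
      · intro A _ _
        exact Finset.sum_nonneg fun e _ => hc e
    have := step2 L us hf2 hmemL
    calc ∑ e ∈ T.edgeFinset, c e ≤ _ := step1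
      _ ≤ _ := this
      _ ≤ _ := step3
end

section
/- Let τ > 0 and let f_0, …, f_q and s_1, …, s_q be sequences of positive reals with f_0 > τ ≥ f_q, satisfying f_i ≤ f_{i-1} − s_i · max{f_{i-1}/τ, 1} for all 1 ≤ i ≤ q. Then f_q + ∑_{i=1}^q s_i ≤ τ(1 + ln(f_0/τ)). -/
lemma phi_step (τ a b s : ℝ) (hτ : 0 < τ) (ha : 0 < a) (hb : 0 < b) (hs : 0 < s)
    (h : b ≤ a - s * max (a / τ) 1) :
    (if b ≤ τ then b else τ * (1 + Real.log (b / τ))) + s ≤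
      (if a ≤ τ then a else τ * (1 + Real.log (a / τ))) := by
  by_cases haτ : a ≤ τ
  · have hmax : max (a / τ) 1 = 1 := by
      rw [max_eq_right]
      exact (div_le_one hτ).mpr haτ
    rw [hmax] at h
    have hbτ : b ≤ τ := by linarith
    simp [haτ, hbτ]
    linarith
  · push_neg at haτ
    have hmax : max (a / τ) 1 = a / τ := by
      rw [max_eq_left]
      exact (one_le_div hτ).mpr haτ.le
    rw [hmax] at h
    have hsa : s * (a / τ) ≤ a - b := by linarith
    have hs' : s ≤ (a - b) * τ / a := by
      rw [le_div_iff₀ ha]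
      have h2 : s * (a / τ) * τ ≤ (a - b) * τ := mul_le_mul_of_nonneg_right hsa hτ.le
      have h3 : s * (a / τ) * τ = s * a := by field_simp
      linarith
    simp only [if_neg (not_le.mpr haτ)]
    by_cases hbτ : b ≤ τ
    · -- goal: b + s ≤ τ*(1+log(a/τ))
      rw [if_pos hbτ]
      have hlog : Real.log (τ / a) ≤ τ / a - 1 :=
        Real.log_le_sub_one_of_pos (by positivity)
      have hlog2 : 1 - τ / a ≤ Real.log (a / τ) := by
        have : Real.log (τ / a) = - Real.log (a / τ) := by
          rw [← Real.log_inv]; congr 1; field_simp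
        linarith
      have h1 : τ * (1 + (1 - τ / a)) ≤ τ * (1 + Real.log (a / τ)) := by
        have := hτ.le
        nlinarith
      have h2 : b + s ≤ τ * (1 + (1 - τ / a)) := by
        have e1 : s ≤ (τ - b) * τ / a + (a - τ) * τ / a := by
          have : (a - b) * τ / a = (τ - b) * τ / a + (a - τ) * τ / a := by
            field_simp; ring
          linarith
        have e2 : (τ - b) * τ / a ≤ τ - b := by
          rw [div_le_iff₀ ha]
          nlinarith
        have e3 : τ * (1 + (1 - τ / a)) = τ + (a - τ) * τ / a := by
          field_simp
        linarith
      linarith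
    · push_neg at hbτ
      rw [if_neg (not_le.mpr hbτ)]
      -- goal: τ*(1+log(b/τ)) + s ≤ τ*(1+log(a/τ))
      have hlog : Real.log (b / a) ≤ b / a - 1 :=
        Real.log_le_sub_one_of_pos (by positivity)
      have hdiff : Real.log (a / τ) - Real.log (b / τ) = - Real.log (b / a) := by
        rw [Real.log_div ha.ne' hτ.ne', Real.log_div hb.ne' hτ.ne',
          Real.log_div hb.ne' ha.ne']
        ring
      have h1 : s ≤ τ * (1 - b / a) := by
        have : (a - b) * τ / a = τ * (1 - b / a) := by field_simp
        linarith
      nlinarith [hτ.le]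

/-- Let τ > 0 and f_0,…,f_q, s_1,…,s_q be positive reals with
f_0 > τ ≥ f_q and f_i ≤ f_{i-1} − s_i · max{f_{i-1}/τ, 1}. Then
f_q + ∑_{i=1}^q s_i ≤ τ(1 + ln(f_0/τ)). -/
theorem stmt_1 (τ : ℝ) (q : ℕ) (f s : ℕ → ℝ)
    (hτ : 0 < τ)
    (hf : ∀ i ≤ q, 0 < f i)
    (hs : ∀ i, 1 ≤ i → i ≤ q → 0 < s i)
    (h0 : τ < f 0) (hq : f q ≤ τ)
    (hrec : ∀ i, 1 ≤ i → i ≤ q →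
      f i ≤ f (i - 1) - s i * max (f (i - 1) / τ) 1) :
    f q + ∑ i ∈ Finset.Icc 1 q, s i ≤ τ * (1 + Real.log (f 0 / τ)) := by
  set Φ : ℝ → ℝ := fun x => if x ≤ τ then x else τ * (1 + Real.log (x / τ)) with hΦ
  have key : ∀ n ≤ q, Φ (f n) + ∑ i ∈ Finset.Icc 1 n, s i ≤ Φ (f 0) := by
    intro n hn
    induction n with
    | zero => simp
    | succ m ih =>
      have hm : m ≤ q := Nat.le_of_succ_le hn
      have hsum : ∑ i ∈ Finset.Icc 1 (m + 1), s i
          = (∑ i ∈ Finset.Icc 1 m, s i) + s (m + 1) := by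
        rw [← Finset.sum_Icc_succ_top (Nat.one_le_iff_ne_zero.mpr (Nat.succ_ne_zero m))]
      have hstep := phi_step τ (f m) (f (m + 1)) (s (m + 1)) hτ (hf m hm)
        (hf (m + 1) hn) (hs (m + 1) (Nat.one_le_iff_ne_zero.mpr (Nat.succ_ne_zero m)) hn)
        (by simpa using hrec (m + 1) (Nat.one_le_iff_ne_zero.mpr (Nat.succ_ne_zero m)) hn)
      have := ih hm
      rw [hsum]
      simp only [hΦ] at *
      linarith
  have hk := key q le_rfl
  have e1 : Φ (f q) = f q := by simp [hΦ, hq]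
  have e2 : Φ (f 0) = τ * (1 + Real.log (f 0 / τ)) := by
    simp [hΦ, not_le.mpr h0]
  rw [e1, e2] at hk
  exact hk
end

section
/- Let G be a graph, Q a subset of vertices, R a terminal set with V = Q ∪ R, and r : R × R → {0,1,2} a requirement function. Suppose G is minimally (r,Q)-connected (i.e., (r,Q)-connected but no proper spanning subgraph is). Let G' = (V', E') be a 2-connected block of G and R' = R ∩ V'. Then |R'| ≥ 2. -/
open SimpleGraph

variable {V : Type*}

/-- `QConn G Q u v k`: there are `k` pairwise edge-disjoint `uv`-paths whose internal
vertices belonging to `Q` are pairwise disjoint (i.e. `k` pairwise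
`(E ∪ Q \ {u,v})`-disjoint `uv`-paths), so `λ^Q_G(u,v) ≥ k`. -/
def QConn (G : SimpleGraph V) (Q : Set V) (u v : V) (k : ℕ) : Prop :=
  ∃ P : Fin k → G.Walk u v,
    (∀ i, (P i).IsPath) ∧
    ∀ i j, i ≠ j →
      (∀ e ∈ (P i).edges, e ∉ (P j).edges) ∧
      (∀ w ∈ Q, w ≠ u → w ≠ v → w ∈ (P i).support → w ∉ (P j).support)

/-- `G` is `(r,Q)`-connected: `λ^Q_G(u,v) ≥ r u v` for all terminals `u, v ∈ R`. -/
def RQConnected (G : SimpleGraph V) (Q R : Set V) (r : V → V → ℕ) : Prop :=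
  ∀ u ∈ R, ∀ v ∈ R, QConn G Q u v (r u v)

/-- Minimally `(r,Q)`-connected: `(r,Q)`-connected, but deleting any edge destroys this. -/
def MinRQConnected (G : SimpleGraph V) (Q R : Set V) (r : V → V → ℕ) : Prop :=
  RQConnected G Q R r ∧
  ∀ e ∈ G.edgeSet, ¬ RQConnected (G.deleteEdges {e}) Q R r

/-- A graph is 2-connected if it has at least 3 vertices and removing any vertex
leaves it connected. -/
def Is2Connected {W : Type*} (G : SimpleGraph W) : Prop :=
  3 ≤ Nat.card W ∧ ∀ v : W, (G.induce {w | w ≠ v}).Connected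

/-- A block of `G`: an inclusion-maximal 2-connected subgraph, or a bridge
(with its endpoints). -/
def IsBlock (G : SimpleGraph V) (H : G.Subgraph) : Prop :=
  (Is2Connected H.coe ∧ ∀ K : G.Subgraph, H ≤ K → Is2Connected K.coe → K = H) ∨
  (∃ (a b : V) (hab : G.Adj a b), G.IsBridge s(a, b) ∧ H = G.subgraphOfAdj hab)

section Aux

variable {G : SimpleGraph V}

/-- Package a `G`-walk whose edges lie in `K` and whose support avoids `v`
into reachability in the vertex-deleted coe graph. -/
lemma aux_reach_induce (K : G.Subgraph) (v : K.verts) :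
    ∀ {a b : V} (W : G.Walk a b),
      (∀ x y, s(x, y) ∈ W.edges → K.Adj x y) →
      (∀ w ∈ W.support, w ∈ K.verts ∧ w ≠ (v : V)) →
      ∀ (ha : a ∈ K.verts) (ha' : (⟨a, ha⟩ : K.verts) ≠ v)
        (hb : b ∈ K.verts) (hb' : (⟨b, hb⟩ : K.verts) ≠ v),
      (K.coe.induce {w | w ≠ v}).Reachable ⟨⟨a, ha⟩, ha'⟩ ⟨⟨b, hb⟩, hb'⟩ := by
  intro a b W
  induction W with
  | nil =>
    intro _ _ ha ha' hb hb'
    rfl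
  | @cons a c b hadj W ih =>
    intro hedge hsup ha ha' hb hb'
    have hc : c ∈ K.verts ∧ c ≠ (v : V) := hsup c (by simp)
    have hc' : (⟨c, hc.1⟩ : K.verts) ≠ v := fun h => hc.2 (congrArg Subtype.val h)
    have hKadj : K.Adj a c := hedge a c (by simp)
    have hstep : (K.coe.induce {w | w ≠ v}).Adj ⟨⟨a, ha⟩, ha'⟩ ⟨⟨c, hc.1⟩, hc'⟩ := by
      simp only [SimpleGraph.comap_adj, Function.Embedding.coe_subtype, Subgraph.coe_adj]
      exact hKadj
    exact hstep.reachable.trans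
      (ih (fun x y hxy => hedge x y (by simp [hxy]))
        (fun w hw => hsup w (by simp [hw])) hc.1 hc' hb hb')

lemma aux_walk_of_reach {K : G.Subgraph} {v : K.verts} {x y : {w : K.verts // w ≠ v}}
    (h : (K.coe.induce {w | w ≠ v}).Reachable x y) :
    ∃ W : G.Walk (x.1 : V) (y.1 : V),
      (∀ w ∈ W.support, w ∈ K.verts ∧ w ≠ (v : V)) ∧
      (∀ c d, s(c, d) ∈ W.edges → K.Adj c d) := by
  obtain ⟨W⟩ := h
  induction W with
  | @nil u =>
    refine ⟨.nil, ?_, by simp⟩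
    intro w hw
    simp only [SimpleGraph.Walk.support_nil, List.mem_singleton] at hw
    subst hw
    exact ⟨u.1.2, fun h => u.2 (Subtype.ext h)⟩
  | @cons p q r hadj W ih =>
    obtain ⟨W', hsup, hedge⟩ := ih
    have hKpq : K.Adj (p.1 : V) (q.1 : V) := by
      simpa only [SimpleGraph.comap_adj, Function.Embedding.coe_subtype,
        Subgraph.coe_adj] using hadj
    refine ⟨.cons hKpq.adj_sub W', ?_, ?_⟩
    · intro w hw
      rcases List.mem_cons.mp ((SimpleGraph.Walk.support_cons _ W') ▸ hw) with h | h
      · subst h; exact ⟨p.1.2, fun h => p.2 (Subtype.ext h)⟩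
      · exact hsup w h
    · intro c d hcd
      rcases List.mem_cons.mp ((SimpleGraph.Walk.edges_cons _ W') ▸ hcd) with h | h
      · rcases Sym2.eq_iff.mp h with ⟨h1, h2⟩ | ⟨h1, h2⟩
        · subst h1; subst h2; exact hKpq
        · subst h1; subst h2; exact hKpq.symm
      · exact hedge c d h

/-- In a 2-connected subgraph one can walk between any two vertices avoiding
any third specified vertex. -/
lemma aux_avoid (H : G.Subgraph) (h2 : Is2Connected H.coe)
    {z a b : V} (hz : z ∈ H.verts) (ha : a ∈ H.verts) (hb : b ∈ H.verts)
    (haz : a ≠ z) (hbz : b ≠ z) :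
    ∃ W : G.Walk a b, (∀ w ∈ W.support, w ∈ H.verts ∧ w ≠ z) ∧
      (∀ c d, s(c, d) ∈ W.edges → H.Adj c d) := by
  have hconn := (h2.2 ⟨z, hz⟩).preconnected
  have hx : (⟨a, ha⟩ : H.verts) ≠ ⟨z, hz⟩ := fun h => haz (congrArg Subtype.val h)
  have hy : (⟨b, hb⟩ : H.verts) ≠ ⟨z, hz⟩ := fun h => hbz (congrArg Subtype.val h)
  exact aux_walk_of_reach (hconn ⟨⟨a, ha⟩, hx⟩ ⟨⟨b, hb⟩, hy⟩)

lemma aux_card3 (H : G.Subgraph) (h3 : 3 ≤ Nat.card H.verts) :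
    3 ≤ H.verts.ncard := by
  rwa [← Nat.card_coe_set_eq]

/-- A third vertex distinct from two given ones. -/
lemma aux_third (H : G.Subgraph) (h3 : 3 ≤ Nat.card H.verts) (a b : V) :
    ∃ z ∈ H.verts, z ≠ a ∧ z ≠ b := by
  have h3' := aux_card3 H h3
  by_contra hcon
  push_neg at hcon
  have hsub : H.verts ⊆ {a, b} := by
    intro w hw
    rcases Classical.em (w = a) with h | h
    · simp [h]
    · simp [hcon w hw h]
  have := Set.ncard_le_ncard hsub (Set.toFinite _)
  have h2 : ({a, b} : Set V).ncard ≤ 2 := by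
    have := Set.ncard_insert_le a ({b} : Set V)
    simpa [Set.ncard_singleton] using this
  omega

/-- Walk between any two vertices of a 2-connected subgraph staying inside it. -/
lemma aux_connect (H : G.Subgraph) (h2 : Is2Connected H.coe)
    {a b : V} (ha : a ∈ H.verts) (hb : b ∈ H.verts) :
    ∃ W : G.Walk a b, (∀ w ∈ W.support, w ∈ H.verts) ∧
      (∀ c d, s(c, d) ∈ W.edges → H.Adj c d) := by
  obtain ⟨z, hz, hza, hzb⟩ := aux_third H h2.1 a b
  obtain ⟨W, hs, he⟩ := aux_avoid H h2 hz ha hb hza.symm hzb.symm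
  exact ⟨W, fun w hw => (hs w hw).1, he⟩

/-- first-hit decomposition -/
lemma aux_first_hit {S : Set V} [DecidablePred (· ∈ S)] :
    ∀ {a b : V} (W : G.Walk a b), (∃ w ∈ W.support, w ∈ S) →
      ∃ (x : V) (W1 : G.Walk a x) (W2 : G.Walk x b),
        x ∈ S ∧ W1.append W2 = W ∧ ∀ w ∈ W1.support, w ∈ S → w = x := by
  intro a b W
  induction W with
  | @nil u =>
    intro h
    obtain ⟨w, hw, hwS⟩ := h
    simp only [SimpleGraph.Walk.support_nil, List.mem_singleton] at hw
    subst hw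
    exact ⟨w, .nil, .nil, hwS, rfl, by simp⟩
  | @cons a c b hadj W ih =>
    intro h
    by_cases haS : a ∈ S
    · refine ⟨a, .nil, .cons hadj W, haS, rfl, by simp⟩
    · have h' : ∃ w ∈ W.support, w ∈ S := by
        obtain ⟨w, hw, hwS⟩ := h
        rcases List.mem_cons.mp ((SimpleGraph.Walk.support_cons _ W) ▸ hw) with h | h
        · exact absurd (h ▸ hwS) haS
        · exact ⟨w, h, hwS⟩
      obtain ⟨x, W1, W2, hxS, heq, hfirst⟩ := ih h'
      refine ⟨x, .cons hadj W1, W2, hxS, by rw [← heq]; rfl, ?_⟩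
      intro w hw hwS
      rcases List.mem_cons.mp ((SimpleGraph.Walk.support_cons _ W1) ▸ hw) with h | h
      · exact absurd (h ▸ hwS) haS
      · exact hfirst w h hwS

lemma aux_edge_toSubgraph {a b : V} {c d : V} (p : G.Walk a b)
    (h : s(c, d) ∈ p.edges) : p.toSubgraph.Adj c d :=
  (Subgraph.mem_edgeSet).mp ((p.mem_edges_toSubgraph).mpr h)

/-- Adding an "ear" (a path between two distinct vertices of `H`, internally
disjoint from `H`) to a 2-connected subgraph yields a 2-connected subgraph. -/
lemma aux_ear [Fintype V] (H : G.Subgraph) (h2 : Is2Connected H.coe)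
    {p1 p2 : V} (p : G.Walk p1 p2) (hp : p.IsPath)
    (hp1 : p1 ∈ H.verts) (hp2 : p2 ∈ H.verts) :
    Is2Connected (H ⊔ p.toSubgraph).coe := by
  classical
  set K := H ⊔ p.toSubgraph with hK
  have hHK : H.verts ⊆ K.verts := by
    rw [hK, Subgraph.verts_sup]; exact Set.subset_union_left
  have hPK : ∀ w ∈ p.support, w ∈ K.verts := by
    intro w hw
    rw [hK, Subgraph.verts_sup]
    exact Set.mem_union_right _ ((p.mem_verts_toSubgraph).mpr hw)
  have hHadjK : ∀ {c d : V}, H.Adj c d → K.Adj c d := fun h => Or.inl h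
  have hPadjK : ∀ {c d : V}, s(c, d) ∈ p.edges → K.Adj c d :=
    fun h => Or.inr (aux_edge_toSubgraph p h)
  have hcard : 3 ≤ Nat.card K.verts := by
    have h3 := h2.1
    rw [Nat.card_coe_set_eq] at h3 ⊢
    exact le_trans h3 (Set.ncard_le_ncard hHK (Set.toFinite _))
  refine ⟨hcard, ?_⟩
  intro v
  set z : V := (v : V) with hz
  have route : ∀ c, c ∈ K.verts → c ≠ z →
      ∃ (h : V) (Wc : G.Walk c h), h ∈ H.verts ∧ h ≠ z ∧
        (∀ w ∈ Wc.support, w ∈ K.verts ∧ w ≠ z) ∧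
        (∀ x y, s(x, y) ∈ Wc.edges → K.Adj x y) := by
    intro c hc hcz
    by_cases hcH : c ∈ H.verts
    · exact ⟨c, .nil, hcH, hcz, by simp [hc, hcz], by simp⟩
    · have hcp : c ∈ p.support := by
        rw [hK, Subgraph.verts_sup] at hc
        rcases hc with h | h
        · exact absurd h hcH
        · exact (p.mem_verts_toSubgraph).mp h
      set q1 := p.takeUntil c hcp with hq1
      set q2 := p.dropUntil c hcp with hq2
      have hspec : q1.append q2 = p := p.take_spec hcp
      have hnodup : (q1.support ++ q2.support.tail).Nodup := by
        have := hp.support_nodup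
        rwa [← hspec, SimpleGraph.Walk.support_append] at this
      by_cases hz1 : z ∈ q1.support
      · have hz2 : z ∉ q2.support := by
          intro hzq2
          rcases List.mem_cons.mp ((q2.support_eq_cons) ▸ hzq2) with h | h
          · exact hcz h.symm
          · exact (List.disjoint_of_nodup_append hnodup) hz1 h
        have hp2z : p2 ≠ z := fun h => hz2 (h ▸ q2.end_mem_support)
        refine ⟨p2, q2, hp2, hp2z, ?_, ?_⟩
        · intro w hw
          have hwp : w ∈ p.support := p.support_dropUntil_subset hcp hw
          exact ⟨hPK w hwp, fun h => hz2 (h ▸ hw)⟩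
        · intro x y hxy
          exact hPadjK (p.edges_dropUntil_subset hcp hxy)
      · have hp1z : p1 ≠ z := fun h => hz1 (h ▸ q1.start_mem_support)
        refine ⟨p1, q1.reverse, hp1, hp1z, ?_, ?_⟩
        · intro w hw
          rw [SimpleGraph.Walk.support_reverse, List.mem_reverse] at hw
          have hwp : w ∈ p.support := p.support_takeUntil_subset hcp hw
          exact ⟨hPK w hwp, fun h => hz1 (h ▸ hw)⟩
        · intro x y hxy
          rw [SimpleGraph.Walk.edges_reverse, List.mem_reverse] at hxy
          exact hPadjK (p.edges_takeUntil_subset hcp hxy)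
  have hconnH : ∀ (ha hb : V), ha ∈ H.verts → hb ∈ H.verts → ha ≠ z → hb ≠ z →
      ∃ W : G.Walk ha hb, (∀ w ∈ W.support, w ∈ K.verts ∧ w ≠ z) ∧
        (∀ x y, s(x, y) ∈ W.edges → K.Adj x y) := by
    intro ha hb haH hbH haz hbz
    by_cases hzH : z ∈ H.verts
    · obtain ⟨W, hs, he⟩ := aux_avoid H h2 hzH haH hbH haz hbz
      exact ⟨W, fun w hw => ⟨hHK (hs w hw).1, (hs w hw).2⟩,
        fun x y hxy => hHadjK (he x y hxy)⟩
    · obtain ⟨W, hs, he⟩ := aux_connect H h2 haH hbH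
      exact ⟨W, fun w hw => ⟨hHK (hs w hw), fun h => hzH (h ▸ hs w hw)⟩,
        fun x y hxy => hHadjK (he x y hxy)⟩
  rw [connected_iff]
  refine ⟨?_, ?_⟩
  · intro x y
    obtain ⟨⟨a, haK⟩, hxv⟩ := x
    obtain ⟨⟨b, hbK⟩, hyv⟩ := y
    have haz : a ≠ z := fun h => hxv (Subtype.ext h)
    have hbz : b ≠ z := fun h => hyv (Subtype.ext h)
    obtain ⟨ha', Wa, ha'H, ha'z, hWa, hWae⟩ := route a haK haz
    obtain ⟨hb', Wb, hb'H, hb'z, hWb, hWbe⟩ := route b hbK hbz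
    obtain ⟨Wm, hWm, hWme⟩ := hconnH ha' hb' ha'H hb'H ha'z hb'z
    set W : G.Walk a b := Wa.append (Wm.append Wb.reverse) with hW
    have hsup : ∀ w ∈ W.support, w ∈ K.verts ∧ w ≠ z := by
      intro w hw
      rw [hW, SimpleGraph.Walk.mem_support_append_iff] at hw
      rcases hw with h | h
      · exact hWa w h
      · rw [SimpleGraph.Walk.mem_support_append_iff] at h
        rcases h with h | h
        · exact hWm w h
        · rw [SimpleGraph.Walk.support_reverse, List.mem_reverse] at h
          exact hWb w h
    have hedg : ∀ x y, s(x, y) ∈ W.edges → K.Adj x y := by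
      intro x y hxy
      rw [hW, SimpleGraph.Walk.edges_append, List.mem_append] at hxy
      rcases hxy with h | h
      · exact hWae x y h
      · rw [SimpleGraph.Walk.edges_append, List.mem_append] at h
        rcases h with h | h
        · exact hWme x y h
        · rw [SimpleGraph.Walk.edges_reverse, List.mem_reverse] at h
          exact hWbe x y h
    exact aux_reach_induce K v W hedg hsup haK hxv hbK hyv
  · have h3 := hcard
    rw [Nat.card_coe_set_eq] at h3
    obtain ⟨w, hw, hwz⟩ := Set.exists_ne_of_one_lt_ncard (s := K.verts) (by omega) z
    exact ⟨⟨⟨w, hw⟩, fun h => hwz (congrArg Subtype.val h)⟩⟩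

/-- If a maximal 2-connected subgraph `H` is approached from an outside vertex `u`
by two walks that each touch `H` only at their final vertex, then these final
vertices coincide. -/
lemma aux_hit_unique [Fintype V] {H : G.Subgraph} (h2 : Is2Connected H.coe)
    (hmax : ∀ K : G.Subgraph, H ≤ K → Is2Connected K.coe → K = H)
    {u x1 x2 : V} (hu : u ∉ H.verts) (hx1 : x1 ∈ H.verts) (hx2 : x2 ∈ H.verts)
    (W1 : G.Walk u x1) (W2 : G.Walk u x2)
    (hW1 : ∀ w ∈ W1.support, w ∈ H.verts → w = x1)
    (hW2 : ∀ w ∈ W2.support, w ∈ H.verts → w = x2) : x1 = x2 := by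
  classical
  by_contra hne
  set W : G.Walk x1 x2 := W1.reverse.append W2 with hWdef
  have hWsup : ∀ w ∈ W.support, w ∈ H.verts → w = x1 ∨ w = x2 := by
    intro w hw hwH
    rw [hWdef, SimpleGraph.Walk.mem_support_append_iff] at hw
    rcases hw with h | h
    · rw [SimpleGraph.Walk.support_reverse, List.mem_reverse] at h
      exact Or.inl (hW1 w h hwH)
    · exact Or.inr (hW2 w h hwH)
  obtain ⟨q, hqp, hqsup, hqedg⟩ : ∃ q : G.Walk x1 x2, q.IsPath ∧
      q.support ⊆ W.support ∧ q.edges ⊆ W.edges :=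
    ⟨W.bypass, W.bypass_isPath, W.support_bypass_subset, W.edges_bypass_subset⟩
  have hint : ∀ w ∈ q.support, w ≠ x1 → w ≠ x2 → w ∉ H.verts := by
    intro w hw h1 h2 hwH
    rcases hWsup w (hqsup hw) hwH with h | h
    · exact h1 h
    · exact h2 h
  have h2K := aux_ear H h2 q hqp hx1 hx2
  have hKH : H ⊔ q.toSubgraph = H :=
    hmax (H ⊔ q.toSubgraph) le_sup_left h2K
  have hqH : q.toSubgraph ≤ H := sup_eq_left.mp hKH
  have hqsupH : ∀ w ∈ q.support, w ∈ H.verts := by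
    intro w hw
    exact (Subgraph.verts_mono hqH) ((q.mem_verts_toSubgraph).mpr hw)
  cases q with
  | nil => exact hne rfl
  | @cons _ c _ hadj q' =>
    have hcsup : c ∈ (SimpleGraph.Walk.cons hadj q').support := by
      rw [SimpleGraph.Walk.support_cons]
      exact List.mem_cons_of_mem _ q'.start_mem_support
    have hcH : c ∈ H.verts := hqsupH c hcsup
    have hc1 : c ≠ x1 := hadj.ne.symm
    by_cases hc2 : c = x2
    · subst hc2
      have hedge : s(x1, c) ∈ W.edges := hqedg (by
        rw [SimpleGraph.Walk.edges_cons]; exact List.mem_cons_self)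
      rw [hWdef, SimpleGraph.Walk.edges_append, List.mem_append] at hedge
      rcases hedge with h | h
      · rw [SimpleGraph.Walk.edges_reverse, List.mem_reverse] at h
        have : c ∈ W1.support := W1.snd_mem_support_of_mem_edges h
        exact hne (hW1 c this hcH).symm
      · have : x1 ∈ W2.support := W2.fst_mem_support_of_mem_edges h
        exact hne (hW2 x1 this hx1)
    · exact hint c hcsup hc1 hc2 hcH

lemma aux_detour {a b : V} (hab : (G.deleteEdges {s(a, b)}).Reachable a b) :
    ∀ {u v : V}, G.Walk u v → (G.deleteEdges {s(a, b)}).Reachable u v := by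
  intro u v W
  induction W with
  | nil => exact .refl _
  | @cons u c v hadj W ih =>
    refine Reachable.trans ?_ ih
    by_cases he : s(u, c) = s(a, b)
    · rcases Sym2.eq_iff.mp he with ⟨h1, h2⟩ | ⟨h1, h2⟩
      · subst h1; subst h2; exact hab
      · subst h1; subst h2; exact hab.symm
    · exact SimpleGraph.Adj.reachable (by
        rw [SimpleGraph.deleteEdges_adj]
        exact ⟨hadj, by simpa using he⟩)

lemma aux_qconn_self (G' : SimpleGraph V) (Q : Set V) (u : V) (k : ℕ) :
    QConn G' Q u u k := by
  refine ⟨fun _ => .nil, fun _ => SimpleGraph.Walk.IsPath.nil, ?_⟩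
  intro i j _
  refine ⟨by simp, ?_⟩
  intro w _ hwu _ hsup
  simp only [SimpleGraph.Walk.support_nil, List.mem_singleton] at hsup
  exact absurd hsup hwu

lemma aux_qconn_zero (G' : SimpleGraph V) (Q : Set V) (u v : V) :
    QConn G' Q u v 0 :=
  ⟨fun i => i.elim0, fun i => i.elim0, fun i => i.elim0⟩

lemma aux_qconn_one {G' : SimpleGraph V} {Q : Set V} {u v : V}
    (h : G'.Reachable u v) : QConn G' Q u v 1 := by
  classical
  obtain ⟨W⟩ := h
  refine ⟨fun _ => W.bypass, fun _ => W.bypass_isPath, ?_⟩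
  intro i j hij
  exact absurd (Subsingleton.elim i j) hij

lemma aux_qconn_two {G' : SimpleGraph V} {Q : Set V} {u v : V}
    {W1 W2 : G'.Walk u v} (h1 : W1.IsPath) (h2 : W2.IsPath)
    (he : ∀ e ∈ W1.edges, e ∉ W2.edges)
    (hq : ∀ w ∈ Q, w ≠ u → w ≠ v → ¬(w ∈ W1.support ∧ w ∈ W2.support)) :
    QConn G' Q u v 2 := by
  refine ⟨fun i => if i = 0 then W1 else W2, ?_, ?_⟩
  · intro i
    by_cases h : i = 0 <;> simp [h, h1, h2]
  · intro i j hij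
    have hcase : (i = 0 ∧ j = 1) ∨ (i = 1 ∧ j = 0) := by omega
    rcases hcase with ⟨hi, hj⟩ | ⟨hi, hj⟩ <;> subst hi <;> subst hj <;>
      simp only [if_pos rfl, if_neg (by decide : (1 : Fin 2) ≠ 0), reduceIte]
    · exact ⟨he, fun w hw hwu hwv hs1 hs2 => hq w hw hwu hwv ⟨hs1, hs2⟩⟩
    · exact ⟨fun e he2 he1 => he e he1 he2,
        fun w hw hwu hwv hs2 hs1 => hq w hw hwu hwv ⟨hs1, hs2⟩⟩

end Aux

/-- if `G` is minimally `(r,Q)`-connected with `{0,1,2}`-requirements and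
`Q ∪ R = V`, then every 2-connected block `G'` of `G` contains at least 2 terminals. -/
theorem stmt_3 [Fintype V] (G : SimpleGraph V) (Q R : Set V) (r : V → V → ℕ)
    (hQR : Q ∪ R = Set.univ) (hr : ∀ u v, r u v ≤ 2)
    (hmin : MinRQConnected G Q R r)
    (H : G.Subgraph) (hblock : IsBlock G H) (h2 : Is2Connected H.coe) :
    2 ≤ (R ∩ H.verts).ncard := by
  classical
  -- maximality of H
  have hmax : ∀ K : G.Subgraph, H ≤ K → Is2Connected K.coe → K = H := by
    rcases hblock with ⟨_, hmax⟩ | ⟨a, b, hab, _, hH⟩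
    · exact hmax
    · exfalso
      have h3 := h2.1
      rw [Nat.card_coe_set_eq, hH] at h3
      simp only [subgraphOfAdj_verts] at h3
      have hle : ({a, b} : Set V).ncard ≤ 2 := by
        have := Set.ncard_insert_le a ({b} : Set V)
        simpa [Set.ncard_singleton] using this
      omega
  -- an edge of H
  obtain ⟨a, b, hHab⟩ : ∃ a b, H.Adj a b := by
    have h3 := aux_card3 H h2.1
    obtain ⟨a0, ha0, b0, hb0, hab0⟩ := (Set.one_lt_ncard (s := H.verts) (Set.toFinite _)).mp (by omega)
    obtain ⟨W, _, hadj⟩ := aux_connect H h2 ha0 hb0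
    cases W with
    | nil => exact absurd rfl hab0
    | cons h W' =>
      exact ⟨_, _, hadj _ _ (by rw [SimpleGraph.Walk.edges_cons]; exact List.mem_cons_self)⟩
  have hGab : G.Adj a b := hHab.adj_sub
  have haH : a ∈ H.verts := hHab.fst_mem
  have hbH : b ∈ H.verts := hHab.snd_mem
  have habne : a ≠ b := hGab.ne
  have hnot := hmin.2 s(a, b) hGab
  simp only [RQConnected, not_forall] at hnot
  obtain ⟨u, hu, v, hv, hq⟩ := hnot
  have huv : u ≠ v := by
    rintro rfl
    exact hq (aux_qconn_self _ Q u (r u u))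
  -- a–b are reachable in G minus e, since e lies in the 2-connected H
  have hreach_ab : (G.deleteEdges {s(a, b)}).Reachable a b := by
    obtain ⟨c0, hc0, hc0a, hc0b⟩ := aux_third H h2.1 a b
    obtain ⟨W1, hs1, he1⟩ := aux_avoid H h2 haH hbH hc0 habne.symm hc0a
    obtain ⟨W2, hs2, he2⟩ := aux_avoid H h2 hbH hc0 haH hc0b habne
    set W : G.Walk b a := W1.append W2 with hW
    have heW : s(a, b) ∉ W.edges := by
      intro hmem
      rw [hW, SimpleGraph.Walk.edges_append, List.mem_append] at hmem
      rcases hmem with h | h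
      · exact (hs1 a (W1.fst_mem_support_of_mem_edges h) ).2 rfl
      · exact (hs2 b (W2.snd_mem_support_of_mem_edges h)).2 rfl
    exact (Reachable.symm ⟨W.toDeleteEdges {s(a, b)}
      (fun e' he' => by
        intro hmem
        rw [Set.mem_singleton_iff] at hmem
        exact heW (hmem ▸ he'))⟩)
  have hk : r u v = 0 ∨ r u v = 1 ∨ r u v = 2 := by have := hr u v; omega
  rcases hk with hk | hk | hk
  · rw [hk] at hq
    exact absurd (aux_qconn_zero _ Q u v) hq
  · -- requirement 1: contradiction since e is on a cycle
    exfalso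
    have hQG := hmin.1 u hu v hv
    rw [hk] at hQG hq
    obtain ⟨P, hP, -⟩ := hQG
    exact hq (aux_qconn_one (aux_detour hreach_ab (P 0)))
  · -- requirement 2
    have hQG := hmin.1 u hu v hv
    rw [hk] at hQG hq
    obtain ⟨P, hP, hD⟩ := hQG
    by_cases hePi : ∃ i, s(a, b) ∈ (P i).edges
    swap
    · -- neither path uses e: both survive deletion
      exfalso
      push_neg at hePi
      have h01 : (0 : Fin 2) ≠ 1 := by decide
      have hD01 := hD 0 1 h01
      refine hq (aux_qconn_two (W1 := (P 0).toDeleteEdges {s(a, b)} ?_)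
        (W2 := (P 1).toDeleteEdges {s(a, b)} ?_) ?_ ?_ ?_ ?_)
      · intro e' he' hmem
        rw [Set.mem_singleton_iff] at hmem
        exact hePi 0 (hmem ▸ he')
      · intro e' he' hmem
        rw [Set.mem_singleton_iff] at hmem
        exact hePi 1 (hmem ▸ he')
      · exact (hP 0).toDeleteEdges _ _ _
      · exact (hP 1).toDeleteEdges _ _ _
      · intro e' he' hmem
        rw [SimpleGraph.Walk.edges_transfer] at he' hmem
        exact hD01.1 e' he' hmem
      · intro w hw hwu hwv hmem
        rw [SimpleGraph.Walk.support_transfer, SimpleGraph.Walk.support_transfer] at hmem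
        exact hD01.2 w hw hwu hwv hmem.1 hmem.2
    -- some path uses e
    obtain ⟨i, hei⟩ := hePi
    set j : Fin 2 := if i = 0 then 1 else 0 with hj
    have hij : i ≠ j := by
      by_cases h : i = 0
      · subst h; simp [hj]
      · have hj0 : j = 0 := by simp [hj, h]
        rw [hj0]; exact h
    set P1 := P i with hP1def
    set P2 := P j with hP2def
    have hD1 := hD i j hij
    have hD2 := hD j i hij.symm
    have hP1p : P1.IsPath := hP i
    have hP2p : P2.IsPath := hP j
    have hejP2 : s(a, b) ∉ P2.edges := hD1.1 _ hei
    have haP1 : a ∈ P1.support := P1.fst_mem_support_of_mem_edges hei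
    haveI : DecidablePred (· ∈ H.verts) := Classical.decPred _
    obtain ⟨x, A, M1, hxH, hsplit1, hA⟩ := aux_first_hit P1 ⟨a, haP1, haH⟩
    obtain ⟨y, B, M2, hyH, hsplit2, hB⟩ := aux_first_hit P1.reverse
      ⟨a, by rw [SimpleGraph.Walk.support_reverse, List.mem_reverse]; exact haP1, haH⟩
    have hAsub : ∀ w ∈ A.support, w ∈ P1.support := by
      intro w hw
      rw [← hsplit1, SimpleGraph.Walk.mem_support_append_iff]
      exact Or.inl hw
    have hAedge : ∀ e' ∈ A.edges, e' ∈ P1.edges := by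
      intro e' he'
      rw [← hsplit1, SimpleGraph.Walk.edges_append]
      exact List.mem_append_left _ he'
    have hBsub : ∀ w ∈ B.support, w ∈ P1.support := by
      intro w hw
      have : w ∈ P1.reverse.support := by
        rw [← hsplit2, SimpleGraph.Walk.mem_support_append_iff]; exact Or.inl hw
      rwa [SimpleGraph.Walk.support_reverse, List.mem_reverse] at this
    have hBedge : ∀ e' ∈ B.edges, e' ∈ P1.edges := by
      intro e' he'
      have : e' ∈ P1.reverse.edges := by
        rw [← hsplit2, SimpleGraph.Walk.edges_append]
        exact List.mem_append_left _ he'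
      rwa [SimpleGraph.Walk.edges_reverse, List.mem_reverse] at this
    have hxy : x ≠ y := by
      intro hxyeq
      subst hxyeq
      set W0 : G.Walk u v := A.append B.reverse with hW0
      obtain ⟨Wq, hWqp, hWqsup, hWqedg⟩ : ∃ q : G.Walk u v, q.IsPath ∧
          q.support ⊆ W0.support ∧ q.edges ⊆ W0.edges :=
        ⟨W0.bypass, W0.bypass_isPath, W0.support_bypass_subset, W0.edges_bypass_subset⟩
      have hWsupP1 : ∀ w ∈ Wq.support, w ∈ P1.support := by
        intro w hw
        have hmem := hWqsup hw
        rw [hW0, SimpleGraph.Walk.mem_support_append_iff] at hmem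
        rcases hmem with h | h
        · exact hAsub w h
        · rw [SimpleGraph.Walk.support_reverse, List.mem_reverse] at h
          exact hBsub w h
      have hWedgP1 : ∀ e' ∈ Wq.edges, e' ∈ P1.edges := by
        intro e' he'
        have hmem := hWqedg he'
        rw [hW0, SimpleGraph.Walk.edges_append, List.mem_append] at hmem
        rcases hmem with h | h
        · exact hAedge e' h
        · rw [SimpleGraph.Walk.edges_reverse, List.mem_reverse] at h
          exact hBedge e' h
      have heWq : s(a, b) ∉ Wq.edges := by
        intro hmem
        have hmem2 := hWqedg hmem
        rw [hW0, SimpleGraph.Walk.edges_append, List.mem_append] at hmem2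
        rcases hmem2 with h | h
        · have haA : a ∈ A.support := A.fst_mem_support_of_mem_edges h
          have hbA : b ∈ A.support := A.snd_mem_support_of_mem_edges h
          exact habne ((hA a haA haH).trans (hA b hbA hbH).symm)
        · rw [SimpleGraph.Walk.edges_reverse, List.mem_reverse] at h
          have haB : a ∈ B.support := B.fst_mem_support_of_mem_edges h
          have hbB : b ∈ B.support := B.snd_mem_support_of_mem_edges h
          exact habne ((hB a haB haH).trans (hB b hbB hbH).symm)
      refine hq (aux_qconn_two (W1 := Wq.toDeleteEdges {s(a, b)} ?_)
        (W2 := P2.toDeleteEdges {s(a, b)} ?_) ?_ ?_ ?_ ?_)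
      · intro e' he' hmem
        rw [Set.mem_singleton_iff] at hmem
        exact heWq (hmem ▸ he')
      · intro e' he' hmem
        rw [Set.mem_singleton_iff] at hmem
        exact hejP2 (hmem ▸ he')
      · exact hWqp.toDeleteEdges _ _ _
      · exact hP2p.toDeleteEdges _ _ _
      · intro e' he' hmem
        rw [SimpleGraph.Walk.edges_transfer] at he' hmem
        exact hD1.1 e' (hWedgP1 e' he') hmem
      · intro w hw hwu hwv hmem
        rw [SimpleGraph.Walk.support_transfer, SimpleGraph.Walk.support_transfer] at hmem
        exact hD1.2 w hw hwu hwv (hWsupP1 w hmem.1) hmem.2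
    have hxA : x ∈ A.support := A.end_mem_support
    have hxP1 : x ∈ P1.support := hAsub x hxA
    have hyB : y ∈ B.support := B.end_mem_support
    have hyP1 : y ∈ P1.support := hBsub y hyB
    have hxP2 : x ∈ P2.support := by
      by_cases huH : u ∈ H.verts
      · have hux : u = x := hA u A.start_mem_support huH
        rw [← hux]
        exact P2.start_mem_support
      · by_cases hP2H : ∃ w ∈ P2.support, w ∈ H.verts
        · obtain ⟨x2, A2, M3, hx2H, hsplit3, hA2⟩ := aux_first_hit P2 hP2H
          have hxx2 : x = x2 := aux_hit_unique h2 hmax huH hxH hx2H A A2 hA hA2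
          rw [hxx2, ← hsplit3, SimpleGraph.Walk.mem_support_append_iff]
          exact Or.inl A2.end_mem_support
        · exfalso
          push_neg at hP2H
          set WW : G.Walk u y := P2.append B with hWW
          have hWWy : ∀ w ∈ WW.support, w ∈ H.verts → w = y := by
            intro w hw hwH
            rw [hWW, SimpleGraph.Walk.mem_support_append_iff] at hw
            rcases hw with h | h
            · exact absurd hwH (hP2H w h)
            · exact hB w h hwH
          exact hxy (aux_hit_unique h2 hmax huH hxH hyH A WW hA hWWy)
    have hyP2 : y ∈ P2.support := by
      by_cases hvH : v ∈ H.verts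
      · have hvy : v = y := hB v B.start_mem_support hvH
        rw [← hvy]
        exact P2.end_mem_support
      · by_cases hP2H : ∃ w ∈ P2.support, w ∈ H.verts
        · obtain ⟨y2, B2, M3, hy2H, hsplit3, hB2⟩ := aux_first_hit P2.reverse (by
            obtain ⟨w, hw, hwH⟩ := hP2H
            exact ⟨w, by rwa [SimpleGraph.Walk.support_reverse, List.mem_reverse], hwH⟩)
          have hyy2 : y = y2 := aux_hit_unique h2 hmax hvH hyH hy2H B B2 hB hB2
          have hmem : y2 ∈ P2.reverse.support := by
            rw [← hsplit3, SimpleGraph.Walk.mem_support_append_iff]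
            exact Or.inl B2.end_mem_support
          rw [SimpleGraph.Walk.support_reverse, List.mem_reverse] at hmem
          rwa [hyy2]
        · exfalso
          push_neg at hP2H
          set WW : G.Walk v x := P2.reverse.append A with hWW
          have hWWx : ∀ w ∈ WW.support, w ∈ H.verts → w = x := by
            intro w hw hwH
            rw [hWW, SimpleGraph.Walk.mem_support_append_iff] at hw
            rcases hw with h | h
            · rw [SimpleGraph.Walk.support_reverse, List.mem_reverse] at h
              exact absurd hwH (hP2H w h)
            · exact hA w h hwH
          exact hxy (aux_hit_unique h2 hmax hvH hyH hxH B WW hB hWWx).symm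
    have hmemQ : ∀ w : V, w ∈ Q ∪ R := by intro w; rw [hQR]; trivial
    have hxR : x ∈ R := by
      by_cases hxu : x = u
      · exact hxu ▸ hu
      by_cases hxv : x = v
      · exact hxv ▸ hv
      rcases hmemQ x with hxQ | hxR
      · exact absurd hxP2 (hD1.2 x hxQ hxu hxv hxP1)
      · exact hxR
    have hyR : y ∈ R := by
      by_cases hyu : y = u
      · exact hyu ▸ hu
      by_cases hyv : y = v
      · exact hyv ▸ hv
      rcases hmemQ y with hyQ | hyR
      · exact absurd hyP2 (hD1.2 y hyQ hyu hyv hyP1)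
      · exact hyR
    have hsub : ({x, y} : Set V) ⊆ R ∩ H.verts := by
      intro w hw
      rcases hw with h | h
      · exact h ▸ ⟨hxR, hxH⟩
      · rw [Set.mem_singleton_iff] at h
        exact h ▸ ⟨hyR, hyH⟩
    calc 2 = ({x, y} : Set V).ncard := (Set.ncard_pair hxy).symm
      _ ≤ (R ∩ H.verts).ncard := Set.ncard_le_ncard hsub (Set.toFinite _)
end

section
/- Let T = (V,F) be a tree rooted at some vertex, with leaf set R and internal vertices S = V \ R, such that every internal vertex has at least 2 children (T is proper). Let F₁ ⊆ F be a set of edges such that every internal vertex u has at least one child connected to u by an edge of F₁. Then there exists a mapping f : S → R such that: (1) for every u ∈ S, f(u) is a descendant leaf of u; (2) the tree paths {P_T(u, f(u)) : u ∈ S} are pairwise edge-disjoint; and (3) for every u ∈ S, the path P_T(u, f(u)) contains at least one edge of F₁. -/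
/-- In a rooted tree given by a parent map, the set of children of `u`. -/
def childSet {V : Type*} (root : V) (parent : V → V) (u : V) : Set V :=
  {v | parent v = u ∧ v ≠ root}

/-- Let `T` be a proper rooted tree (each internal vertex has at least 2
children), and let `F₁` be a set of edges (an edge being identified with its child
endpoint) such that every internal vertex has a child edge in `F₁`. Then there is a
mapping `f` from internal vertices to leaves such that `f u` is a descendant leaf of
`u`, the paths from `u` down to `f u` are pairwise edge-disjoint, and each such path
contains an edge of `F₁`. -/
theorem stmt_8 {V : Type*} [Fintype V] (root : V) (parent : V → V)
    (hroot : parent root = root)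
    (hacyc : ∀ v, ∃ n, parent^[n] v = root)
    (hproper : ∀ u, (childSet root parent u).Nonempty →
      2 ≤ (childSet root parent u).ncard)
    (F₁ : Set V) (hF₁root : root ∉ F₁)
    (hF₁ : ∀ u, (childSet root parent u).Nonempty →
      ∃ v ∈ childSet root parent u, v ∈ F₁) :
    ∃ (f : V → V) (m : V → ℕ),
      (∀ u, (childSet root parent u).Nonempty →
        childSet root parent (f u) = ∅ ∧ 0 < m u ∧ parent^[m u] (f u) = u) ∧
      (∀ u u', (childSet root parent u).Nonempty →
        (childSet root parent u').Nonempty → u ≠ u' →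
        Disjoint {w | ∃ i < m u, w = parent^[i] (f u)}
                 {w | ∃ i < m u', w = parent^[i] (f u')}) ∧
      (∀ u, (childSet root parent u).Nonempty →
        ∃ i < m u, parent^[i] (f u) ∈ F₁) := by
  classical
  set C := childSet root parent with hCdef
  -- depth of a vertex
  set dep : V → ℕ := fun v => Nat.find (hacyc v) with hdepdef
  have hdep_spec : ∀ v, parent^[dep v] v = root := fun v => Nat.find_spec (hacyc v)
  have hdep_min : ∀ v n, n < dep v → parent^[n] v ≠ root :=
    fun v n hn => Nat.find_min (hacyc v) hn
  have hdep_le : ∀ v n, parent^[n] v = root → dep v ≤ n := fun v n hn => Nat.find_le hn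
  have hchild : ∀ u v, v ∈ C u → parent v = u ∧ v ≠ root ∧ dep v = dep u + 1 := by
    intro u v hv
    obtain ⟨hpv, hvr⟩ := hv
    refine ⟨hpv, hvr, ?_⟩
    have h1 : 1 ≤ dep v := by
      rcases Nat.eq_zero_or_pos (dep v) with h | h
      · exact absurd (by simpa [h] using hdep_spec v) hvr
      · exact h
    have h2 : parent^[dep v - 1] u = root := by
      have hsp := hdep_spec v
      have h3 : dep v = (dep v - 1) + 1 := by omega
      rw [h3, Function.iterate_succ_apply, hpv] at hsp
      exact hsp
    have h4 : dep u ≤ dep v - 1 := hdep_le u _ h2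
    have h5 : parent^[dep u + 1] v = root := by
      rw [Function.iterate_succ_apply, hpv]; exact hdep_spec u
    have h6 : dep v ≤ dep u + 1 := hdep_le v _ h5
    omega
  have hdep_lt : ∀ v, dep v < Fintype.card V := by
    intro v
    have hdist : ∀ i j : ℕ, i < j → j ≤ dep v → parent^[i] v ≠ parent^[j] v := by
      intro i j hij hj heq
      have h1 : parent^[dep v - j + i] v = parent^[dep v - j + j] v := by
        rw [Function.iterate_add_apply, Function.iterate_add_apply, heq]
      rw [show dep v - j + j = dep v by omega] at h1
      rw [hdep_spec v] at h1
      exact hdep_min v _ (by omega) h1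
    have hinj : Function.Injective (fun i : Fin (dep v + 1) => parent^[(i : ℕ)] v) := by
      intro i j hij
      by_contra hne
      have hi := Nat.lt_succ_iff.mp i.isLt
      have hj := Nat.lt_succ_iff.mp j.isLt
      rcases Nat.lt_or_ge (i : ℕ) (j : ℕ) with h | h
      · exact hdist i j h hj hij
      · have h' : (j : ℕ) < (i : ℕ) := by
          rcases Nat.lt_or_ge (j : ℕ) (i : ℕ) with h2 | h2
          · exact h2
          · exact absurd (Fin.ext (by omega)) hne
        exact hdist j i h' hi hij.symm
    have hcard := Fintype.card_le_of_injective _ hinj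
    simp [Fintype.card_fin] at hcard
    omega
  -- choose the F₁ child
  have hdx : ∀ u, ∃ w, (C u).Nonempty → w ∈ C u ∧ w ∈ F₁ := by
    intro u
    by_cases h : (C u).Nonempty
    · obtain ⟨v, hv, hvF⟩ := hF₁ u h
      exact ⟨v, fun _ => ⟨hv, hvF⟩⟩
    · exact ⟨u, fun h' => absurd h' h⟩
  choose d hd using hdx
  -- choose a child different from the F₁ child
  have hex : ∀ u, ∃ w, (C u).Nonempty → w ∈ C u ∧ w ≠ d u := by
    intro u
    by_cases h : (C u).Nonempty
    · have h2 := hproper u h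
      by_contra hc
      push_neg at hc
      have hsub : C u ⊆ {d u} := fun w hw => (hc w).2 hw
      have hle := Set.ncard_le_ncard hsub (Set.finite_singleton _)
      rw [Set.ncard_singleton] at hle
      omega
    · exact ⟨u, fun h' => absurd h' h⟩
  choose e he using hex
  -- the descent step
  set E : V → V := fun v => if (C v).Nonempty then e v else v with hEdef
  have hE_int : ∀ v, (C v).Nonempty → E v = e v := fun v h => if_pos h
  have hE_leaf : ∀ v, ¬(C v).Nonempty → E v = v := fun v h => if_neg h
  have hE_fix : ∀ n v, ¬(C v).Nonempty → E^[n] v = v := by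
    intro n
    induction n with
    | zero => intro v _; rfl
    | succ n ih => intro v h; rw [Function.iterate_succ_apply, hE_leaf v h]; exact ih v h
  have hdepE : ∀ v, dep v ≤ dep (E v) := by
    intro v
    by_cases h : (C v).Nonempty
    · rw [hE_int v h]
      have := (hchild v (e v) (he v h).1).2.2
      omega
    · rw [hE_leaf v h]
  have hdepEn : ∀ n v, dep v ≤ dep (E^[n] v) := by
    intro n
    induction n with
    | zero => intro v; exact le_rfl
    | succ n ih =>
      intro v
      rw [Function.iterate_succ_apply]
      exact le_trans (hdepE v) (ih (E v))
  set N := Fintype.card V with hNdef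
  -- after N steps we are at a leaf
  have hleafn : ∀ n v, N ≤ dep v + n → ¬(C (E^[n] v)).Nonempty := by
    intro n
    induction n with
    | zero => intro v h; exact absurd h (by have := hdep_lt v; omega)
    | succ n ih =>
      intro v h
      rw [Function.iterate_succ_apply]
      by_cases hv : (C v).Nonempty
      · rw [hE_int v hv]
        apply ih
        have := (hchild v (e v) (he v hv).1).2.2
        omega
      · rw [hE_leaf v hv, hE_fix n v hv]; exact hv
  -- ascending back up
  have hasc : ∀ n v, parent^[dep (E^[n] v) - dep v] (E^[n] v) = v := by
    intro n
    induction n with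
    | zero => intro v; simp
    | succ n ih =>
      intro v
      rw [Function.iterate_succ_apply]
      by_cases hv : (C v).Nonempty
      · rw [hE_int v hv]
        obtain ⟨hpw, hwr, hdw⟩ := hchild v (e v) (he v hv).1
        have hle := hdepEn n (e v)
        rw [show dep (E^[n] (e v)) - dep v = (dep (E^[n] (e v)) - dep (e v)) + 1 by omega,
          Function.iterate_succ_apply', ih (e v), hpw]
      · rw [hE_leaf v hv, hE_fix n v hv]
        simp
  -- every edge strictly below the start is an e-edge
  have hchain : ∀ n v i, i + 1 ≤ dep (E^[n] v) - dep v →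
      (C (parent^[i+1] (E^[n] v))).Nonempty ∧
      parent^[i] (E^[n] v) = e (parent^[i+1] (E^[n] v)) := by
    intro n
    induction n with
    | zero => intro v i h; rw [Function.iterate_zero_apply] at h; omega
    | succ n ih =>
      intro v i h
      rw [show E^[n+1] v = E^[n] (E v) from Function.iterate_succ_apply E n v] at h ⊢
      by_cases hv : (C v).Nonempty
      · rw [hE_int v hv] at h ⊢
        obtain ⟨hpw, hwr, hdw⟩ := hchild v (e v) (he v hv).1
        have hle := hdepEn n (e v)
        by_cases hi : i + 1 ≤ dep (E^[n] (e v)) - dep (e v)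
        · exact ih (e v) i hi
        · have hieq : i = dep (E^[n] (e v)) - dep (e v) := by omega
          have h1 : parent^[i] (E^[n] (e v)) = e v := by rw [hieq]; exact hasc n (e v)
          have h2 : parent^[i+1] (E^[n] (e v)) = v := by
            rw [Function.iterate_succ_apply', h1, hpw]
          rw [h1, h2]
          exact ⟨hv, rfl⟩
      · rw [hE_leaf v hv] at h ⊢
        exact ih v i h
  -- consolidated facts for internal vertices
  have hfact : ∀ u, (C u).Nonempty →
      dep u + 1 ≤ dep (E^[N] (d u)) ∧
      parent^[dep (E^[N] (d u)) - dep u] (E^[N] (d u)) = u ∧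
      parent^[dep (E^[N] (d u)) - dep u - 1] (E^[N] (d u)) = d u ∧
      (∀ i, i + 1 ≤ dep (E^[N] (d u)) - dep u - 1 →
        (C (parent^[i+1] (E^[N] (d u)))).Nonempty ∧
        parent^[i] (E^[N] (d u)) = e (parent^[i+1] (E^[N] (d u)))) ∧
      ¬(C (E^[N] (d u))).Nonempty := by
    intro u hu
    obtain ⟨hpd, hdr, hdd⟩ := hchild u (d u) (hd u hu).1
    have hle : dep (d u) ≤ dep (E^[N] (d u)) := hdepEn N (d u)
    have h1 : dep u + 1 ≤ dep (E^[N] (d u)) := by omega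
    have hsub : dep (E^[N] (d u)) - dep u - 1 = dep (E^[N] (d u)) - dep (d u) := by omega
    refine ⟨h1, ?_, ?_, ?_, hleafn N (d u) (by omega)⟩
    · rw [show dep (E^[N] (d u)) - dep u = (dep (E^[N] (d u)) - dep (d u)) + 1 by omega,
        Function.iterate_succ_apply', hasc N (d u), hpd]
    · rw [hsub]; exact hasc N (d u)
    · intro i hi
      rw [hsub] at hi
      exact hchain N (d u) i hi
  refine ⟨fun u => E^[N] (d u), fun u => dep (E^[N] (d u)) - dep u, ?_, ?_, ?_⟩
  · intro u hu
    obtain ⟨h1, h2, _, _, h5⟩ := hfact u hu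
    exact ⟨Set.not_nonempty_iff_eq_empty.mp h5,
      show 0 < dep (E^[N] (d u)) - dep u by omega, h2⟩
  · -- disjointness
    have key : ∀ k u u' i j, (C u).Nonempty → (C u').Nonempty →
        i < dep (E^[N] (d u)) - dep u → j < dep (E^[N] (d u')) - dep u' →
        dep (E^[N] (d u)) - dep u - 1 - i ≤ k →
        parent^[i] (E^[N] (d u)) = parent^[j] (E^[N] (d u')) → u = u' := by
      intro k
      induction k with
      | zero =>
        intro u u' i j hu hu' hi hj hk heq
        obtain ⟨hm1, _, htop, hmid, _⟩ := hfact u hu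
        obtain ⟨hm1', _, htop', hmid', _⟩ := hfact u' hu'
        have hieq : i = dep (E^[N] (d u)) - dep u - 1 := by omega
        rw [hieq, htop] at heq
        by_cases hj' : j = dep (E^[N] (d u')) - dep u' - 1
        · rw [hj', htop'] at heq
          have hc := congrArg parent heq
          rw [(hchild u (d u) (hd u hu).1).1, (hchild u' (d u') (hd u' hu').1).1] at hc
          exact hc
        · have hjj : j + 1 ≤ dep (E^[N] (d u')) - dep u' - 1 := by omega
          obtain ⟨hint, hee⟩ := hmid' j hjj
          rw [hee] at heq
          have hpe := (hchild _ _ (he _ hint).1).1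
          have hpu : parent (d u) = u := (hchild u (d u) (hd u hu).1).1
          have hx : u = parent^[j+1] (E^[N] (d u')) := by rw [← hpu, heq, hpe]
          rw [← hx] at heq hint
          exact absurd heq.symm (he u hu).2
      | succ k ih =>
        intro u u' i j hu hu' hi hj hk heq
        by_cases hik : dep (E^[N] (d u)) - dep u - 1 - i ≤ k
        · exact ih u u' i j hu hu' hi hj hik heq
        · obtain ⟨hm1, _, htop, hmid, _⟩ := hfact u hu
          obtain ⟨hm1', _, htop', hmid', _⟩ := hfact u' hu'
          have hii : i + 1 ≤ dep (E^[N] (d u)) - dep u - 1 := by omega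
          obtain ⟨hint, hee⟩ := hmid i hii
          by_cases hj' : j = dep (E^[N] (d u')) - dep u' - 1
          · rw [hj', htop'] at heq
            rw [hee] at heq
            have hpe := (hchild _ _ (he _ hint).1).1
            have hpu' : parent (d u') = u' := (hchild u' (d u') (hd u' hu').1).1
            have hx : parent^[i+1] (E^[N] (d u)) = u' := by rw [← hpe, heq, hpu']
            rw [hx] at heq
            exact absurd heq (he u' hu').2
          · have heq' : parent^[i+1] (E^[N] (d u)) = parent^[j+1] (E^[N] (d u')) := by
              rw [Function.iterate_succ_apply', Function.iterate_succ_apply', heq]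
            exact ih u u' (i+1) (j+1) hu hu' (by omega) (by omega) (by omega) heq'
    intro u u' hu hu' hne
    rw [Set.disjoint_left]
    rintro w ⟨i, hi, rfl⟩ ⟨j, hj, heq⟩
    exact hne (key (dep (E^[N] (d u)) - dep u) u u' i j hu hu' hi hj (by omega) heq)
  · intro u hu
    obtain ⟨h1, _, h3, _, _⟩ := hfact u hu
    exact ⟨dep (E^[N] (d u)) - dep u - 1,
      show dep (E^[N] (d u)) - dep u - 1 < dep (E^[N] (d u)) - dep u by omega,
      by rw [h3]; exact (hd u hu).2⟩
end

section
/- Any proper rooted tree (every internal vertex has at least 2 children) with leaf set R and internal vertex set S admits a proper mapping: a function f : S → R such that f(u) is a descendant of u for every u ∈ S, and the tree paths {P_T(u, f(u)) : u ∈ S} are pairwise edge-disjoint. -/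
/-- Every proper rooted tree (each internal vertex has at least 2
children) admits a proper mapping `f` from internal vertices to leaves: `f u` is a
descendant leaf of `u`, and the tree paths from `u` down to `f u` are pairwise
edge-disjoint (edges being identified by their child endpoint). -/
theorem stmt_9 {V : Type*} [Fintype V] (root : V) (parent : V → V)
    (hroot : parent root = root)
    (hacyc : ∀ v, ∃ n, parent^[n] v = root)
    (hproper : ∀ u, (childSet root parent u).Nonempty →
      2 ≤ (childSet root parent u).ncard) :
    ∃ (f : V → V) (m : V → ℕ),
      (∀ u, (childSet root parent u).Nonempty →
        childSet root parent (f u) = ∅ ∧ 0 < m u ∧ parent^[m u] (f u) = u) ∧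
      (∀ u u', (childSet root parent u).Nonempty →
        (childSet root parent u').Nonempty → u ≠ u' →
        Disjoint {w | ∃ i < m u, w = parent^[i] (f u)}
                 {w | ∃ i < m u', w = parent^[i] (f u')}) := by
  classical
  -- depth
  let d : V → ℕ := fun v => Nat.find (hacyc v)
  have hd : ∀ v, parent^[d v] v = root := fun v => Nat.find_spec (hacyc v)
  have hdmin : ∀ v n, n < d v → parent^[n] v ≠ root := fun v n h => Nat.find_min (hacyc v) h
  have hdle : ∀ v n, parent^[n] v = root → d v ≤ n := fun v n h => Nat.find_le h
  have hdchild : ∀ w, w ≠ root → d w = d (parent w) + 1 := by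
    intro w hw
    have h1 : 1 ≤ d w := by
      rcases Nat.eq_zero_or_pos (d w) with h | h
      · exact absurd (by simpa [h] using hd w) hw
      · exact h
    obtain ⟨k, hk⟩ : ∃ k, d w = k + 1 := ⟨d w - 1, by omega⟩
    have hpk : parent^[k] (parent w) = root := by
      have h2 := hd w
      rw [hk, Function.iterate_succ_apply] at h2
      exact h2
    have hle : d (parent w) ≤ k := hdle _ _ hpk
    have hge : k ≤ d (parent w) := by
      by_contra h
      push_neg at h
      exact hdmin w (d (parent w) + 1) (by omega)
        (by rw [Function.iterate_succ_apply]; exact hd (parent w))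
    omega
  have hdbound : ∀ v, d v < Fintype.card V := by
    intro v
    have haux : ∀ i j : ℕ, i < j → j ≤ d v → parent^[i] v ≠ parent^[j] v := by
      intro i j hij hj heq
      have h1 : parent^[d v - j] (parent^[j] v) = root := by
        rw [← Function.iterate_add_apply]
        have : d v - j + j = d v := by omega
        rw [this]; exact hd v
      rw [← heq, ← Function.iterate_add_apply] at h1
      exact hdmin v (d v - j + i) (by omega) h1
    have hinj : Function.Injective (fun i : Fin (d v + 1) => parent^[(i : ℕ)] v) := by
      intro i j hij
      by_contra hne
      rcases lt_trichotomy (i : ℕ) (j : ℕ) with h | h | h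
      · exact haux i j h (by omega) hij
      · exact hne (Fin.ext h)
      · exact haux j i h (by omega) hij.symm
    have := Fintype.card_le_of_injective _ hinj
    simpa using this
  -- choose two distinct children of each internal vertex
  have hpair : ∀ u, ∃ a b, (childSet root parent u).Nonempty →
      (parent a = u ∧ a ≠ root) ∧ (parent b = u ∧ b ≠ root) ∧ a ≠ b := by
    intro u
    by_cases h : (childSet root parent u).Nonempty
    · have h2 : 1 < (childSet root parent u).ncard := hproper u h
      rw [Set.one_lt_ncard_iff (Set.toFinite _)] at h2
      obtain ⟨a, b, ha, hb, hab⟩ := h2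
      simp only [childSet, Set.mem_setOf_eq] at ha hb
      exact ⟨a, b, fun _ => ⟨ha, hb, hab⟩⟩
    · exact ⟨u, u, fun h' => absurd h' h⟩
  choose c1 c2 hc using hpair
  let g : V → V := fun v => if (childSet root parent v).Nonempty then c1 v else v
  have hg : ∀ v, (childSet root parent v).Nonempty → g v = c1 v := fun v h => if_pos h
  have hgp : ∀ v, (childSet root parent v).Nonempty → parent (g v) = v ∧ g v ≠ root := by
    intro v h
    rw [hg v h]
    exact ⟨(hc v h).1.1, (hc v h).1.2⟩
  have hc2 : ∀ u, (childSet root parent u).Nonempty → parent (c2 u) = u ∧ c2 u ≠ root :=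
    fun u h => ⟨(hc u h).2.1.1, (hc u h).2.1.2⟩
  have hc12 : ∀ u, (childSet root parent u).Nonempty → c1 u ≠ c2 u := fun u h => (hc u h).2.2
  -- growth of depth along g-chains
  have hgrow : ∀ w n, (∀ j < n, (childSet root parent (g^[j] w)).Nonempty) →
      d (g^[n] w) = d w + n := by
    intro w n
    induction n with
    | zero => intro _; simp
    | succ k ih =>
      intro h
      have hk := ih (fun j hj => h j (by omega))
      have hint := h k (by omega)
      rw [Function.iterate_succ_apply']
      have hp := hgp _ hint
      rw [hdchild (g (g^[k] w)) hp.2, hp.1, hk]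
      omega
  have hterm : ∀ u, ∃ n, ¬ (childSet root parent (g^[n] (c2 u))).Nonempty := by
    intro u
    by_contra h
    push_neg at h
    have hgr := hgrow (c2 u) (Fintype.card V) (fun j _ => h j)
    have hb := hdbound (g^[Fintype.card V] (c2 u))
    omega
  let t : V → ℕ := fun u => Nat.find (hterm u)
  let f : V → V := fun u => g^[t u] (c2 u)
  let m : V → ℕ := fun u => t u + 1
  have htspec : ∀ u, ¬ (childSet root parent (g^[t u] (c2 u))).Nonempty :=
    fun u => Nat.find_spec (hterm u)
  have htmin : ∀ u j, j < t u → (childSet root parent (g^[j] (c2 u))).Nonempty :=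
    fun u j hj => not_not.mp (Nat.find_min (hterm u) hj)
  -- going up the chain
  have hup : ∀ u, (childSet root parent u).Nonempty →
      ∀ j, j ≤ t u → parent^[j] (f u) = g^[t u - j] (c2 u) := by
    intro u hu j
    induction j with
    | zero => intro _; simp [f]
    | succ k ih =>
      intro h
      rw [Function.iterate_succ_apply', ih (by omega)]
      obtain ⟨l, hl⟩ : ∃ l, t u - k = l + 1 := ⟨t u - k - 1, by omega⟩
      rw [hl, Function.iterate_succ_apply']
      have hint := htmin u l (by omega)
      rw [(hgp _ hint).1]
      have : t u - (k + 1) = l := by omega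
      rw [this]
  -- path sets in chain form
  have hset : ∀ u, (childSet root parent u).Nonempty →
      {w | ∃ i < m u, w = parent^[i] (f u)} = {w | ∃ j, j ≤ t u ∧ w = g^[j] (c2 u)} := by
    intro u hu
    ext w
    simp only [Set.mem_setOf_eq]
    constructor
    · rintro ⟨i, hi, rfl⟩
      have hi' : i ≤ t u := by
        have : m u = t u + 1 := rfl
        omega
      exact ⟨t u - i, by omega, hup u hu i hi'⟩
    · rintro ⟨j, hj, rfl⟩
      refine ⟨t u - j, by
        have : m u = t u + 1 := rfl
        omega, ?_⟩
      rw [hup u hu (t u - j) (by omega)]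
      have : t u - (t u - j) = j := by omega
      rw [this]
  -- key disjointness lemma
  have key : ∀ n u u', (childSet root parent u).Nonempty → (childSet root parent u').Nonempty →
      u ≠ u' → ∀ j j', j ≤ t u → j' ≤ t u' → j + j' ≤ n →
      g^[j] (c2 u) ≠ g^[j'] (c2 u') := by
    intro n
    induction n with
    | zero =>
      intro u u' hu hu' hne j j' hj hj' hsum heq
      have hj0 : j = 0 := by omega
      have hj'0 : j' = 0 := by omega
      subst hj0; subst hj'0
      simp only [Function.iterate_zero_apply] at heq
      exact hne (by rw [← (hc2 u hu).1, heq, (hc2 u' hu').1])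
    | succ n ih =>
      intro u u' hu hu' hne j j' hj hj' hsum heq
      cases j with
      | zero =>
        cases j' with
        | zero =>
          simp only [Function.iterate_zero_apply] at heq
          exact hne (by rw [← (hc2 u hu).1, heq, (hc2 u' hu').1])
        | succ k =>
          simp only [Function.iterate_zero_apply] at heq
          have hint := htmin u' k (by omega)
          rw [Function.iterate_succ_apply'] at heq
          have h1 : u = g^[k] (c2 u') := by
            rw [← (hc2 u hu).1, heq, (hgp _ hint).1]
          have h2 : c2 u = c1 u := by rw [heq, ← h1, hg u hu]
          exact hc12 u hu h2.symm
      | succ i =>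
        cases j' with
        | zero =>
          simp only [Function.iterate_zero_apply] at heq
          have hint := htmin u i (by omega)
          rw [Function.iterate_succ_apply'] at heq
          have h1 : u' = g^[i] (c2 u) := by
            rw [← (hc2 u' hu').1, ← heq, (hgp _ hint).1]
          have h2 : c2 u' = c1 u' := by rw [← heq, ← h1, hg u' hu']
          exact hc12 u' hu' h2.symm
        | succ k =>
          have hiu := htmin u i (by omega)
          have hku' := htmin u' k (by omega)
          rw [Function.iterate_succ_apply', Function.iterate_succ_apply'] at heq
          have h1 : g^[i] (c2 u) = g^[k] (c2 u') := by
            rw [← (hgp _ hiu).1, heq, (hgp _ hku').1]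
          exact ih u u' hu hu' hne i k (by omega) (by omega) (by omega) h1
  refine ⟨f, m, ?_, ?_⟩
  · intro u hu
    refine ⟨Set.not_nonempty_iff_eq_empty.mp (htspec u), Nat.succ_pos _, ?_⟩
    show parent^[t u + 1] (f u) = u
    rw [Function.iterate_succ_apply', hup u hu (t u) le_rfl]
    have : t u - t u = 0 := by omega
    rw [this]
    simp only [Function.iterate_zero_apply]
    exact (hc2 u hu).1
  · intro u u' hu hu' hne
    rw [hset u hu, hset u' hu', Set.disjoint_left]
    rintro w ⟨j, hj, rfl⟩ ⟨j', hj', heq⟩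
    exact key (j + j') u u' hu hu' hne j j' hj hj' le_rfl heq
end

section
/- Let Δ ≥ 2, let k ≤ Δ be a positive integer, and consider the ST-MSP instance I consisting of Δ terminal points on the unit sphere of a normed space with pairwise distances greater than 1 (plus the center available as a Steiner point). Then opt(I) = 1 while any feasible solution to the rank-k hypergraph relaxation has cost at least Δ/k; i.e., τ_k(I)/opt(I) ≥ Δ/k, where τ_k(I) is the minimum cost of a connected spanning sub-hypergraph of the hypergraph on the Δ terminals whose hyperedges are terminal subsets A of size between 2 and k with cost equal to the optimal ST-MSP value on A. -/
open SimpleGraph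

/-- The unit-disk graph of a set `P` of points in a metric space. -/
def unitDisk {M : Type*} [MetricSpace M] (P : Set M) : SimpleGraph P :=
  SimpleGraph.fromRel (fun x y => dist (x : M) (y : M) ≤ 1)

/-- `n` Steiner points suffice to connect the terminal set `R` in ST-MSP. -/
def STMSPSol {M : Type*} [MetricSpace M] (R : Set M) (n : ℕ) : Prop :=
  ∃ S : Finset M, S.card = n ∧ (unitDisk (R ∪ ↑S)).Connected

lemma connected_of_center {E : Type*} [NormedAddCommGroup E]
    (P : Set E) (hP : ∀ x ∈ P, ‖x‖ = 1) :
    (unitDisk (P ∪ ↑({0} : Finset E))).Connected := by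
  have h0 : (0 : E) ∈ P ∪ ↑({0} : Finset E) := by simp
  set c : ↥(P ∪ ↑({0} : Finset E)) := ⟨0, h0⟩ with hc
  haveI : Nonempty ↥(P ∪ ↑({0} : Finset E)) := ⟨c⟩
  have key : ∀ u : ↥(P ∪ ↑({0} : Finset E)),
      (unitDisk (P ∪ ↑({0} : Finset E))).Reachable u c := by
    intro u
    rcases eq_or_ne u c with h | h
    · exact h ▸ Reachable.refl _
    · have hu : (u : E) ∈ P := by
        rcases u.2 with h' | h'
        · exact h'
        · exfalso; apply h; apply Subtype.ext; simpa using h'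
      apply SimpleGraph.Adj.reachable
      refine ⟨h, Or.inl ?_⟩
      have : dist (u : E) (0 : E) = 1 := by
        rw [dist_eq_norm, sub_zero, hP _ hu]
      simp [hc, this]
  exact ⟨fun u v => (key u).trans (key v).symm⟩

lemma reachable_eq_of_no_adj {V : Type*} {G : SimpleGraph V} (h : ∀ u v, ¬ G.Adj u v)
    {u v : V} (hr : G.Reachable u v) : u = v := by
  obtain ⟨w⟩ := hr
  cases w with
  | nil => rfl
  | cons ha _ => exact absurd ha (h _ _)

lemma zero_not_sol {E : Type*} [NormedAddCommGroup E] {P : Set E}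
    (hsep : ∀ x ∈ P, ∀ y ∈ P, x ≠ y → 1 < dist x y)
    {x y : E} (hx : x ∈ P) (hy : y ∈ P) (hxy : x ≠ y) :
    ¬ STMSPSol P 0 := by
  rintro ⟨S, hS, hconn⟩
  rw [Finset.card_eq_zero] at hS
  subst hS
  have hP : P ∪ ↑(∅ : Finset E) = P := by simp
  rw [hP] at hconn
  have hadj : ∀ u v : ↥P, ¬ (unitDisk P).Adj u v := by
    rintro u v ⟨hne, h | h⟩
    · exact absurd h (not_le.mpr (hsep _ u.2 _ v.2 (fun e => hne (Subtype.ext e))))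
    · exact absurd h (not_le.mpr (hsep _ v.2 _ u.2 (fun e => hne (Subtype.ext e.symm))))
  exact hxy (congrArg Subtype.val
    (reachable_eq_of_no_adj hadj (hconn.preconnected ⟨x, hx⟩ ⟨y, hy⟩)))

/-- For `Δ` terminals on the unit sphere of a normed space with pairwise
distances `> 1` and `k ≤ Δ`, the ST-MSP optimum is `1`, while any connected spanning
sub-hypergraph of the rank-`k` hypergraph (with hyperedge costs the ST-MSP optima)
has cost at least `Δ/k`; i.e. `τ_k ≥ (Δ/k)·opt`. -/
theorem stmt_10 {E : Type*} [NormedAddCommGroup E] [NormedSpace ℝ E]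
    (Δ k : ℕ) (hΔ : 2 ≤ Δ) (hk1 : 1 ≤ k) (hkΔ : k ≤ Δ)
    (p : Fin Δ → E) (hnorm : ∀ i, ‖p i‖ = 1)
    (hdist : ∀ i j, i ≠ j → 1 < dist (p i) (p j)) :
    sInf {n : ℕ | STMSPSol (Set.range p) n} = 1 ∧
    ∀ 𝓣 : Finset (Finset (Fin Δ)),
      (∀ A ∈ 𝓣, 2 ≤ A.card ∧ A.card ≤ k) →
      (SimpleGraph.fromRel (fun i j : Fin Δ => ∃ A ∈ 𝓣, i ∈ A ∧ j ∈ A)).Connected →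
      Δ ≤ k * ∑ A ∈ 𝓣, sInf {n : ℕ | STMSPSol (p '' ↑A) n} := by
  have hpinj : Function.Injective p := by
    intro i j h
    by_contra hne
    have := hdist i j hne
    rw [h] at this
    simp at this
    linarith
  constructor
  · have h1 : STMSPSol (Set.range p) 1 :=
      ⟨{0}, Finset.card_singleton _,
        connected_of_center _ (by rintro x ⟨i, rfl⟩; exact hnorm i)⟩
    have h0 : ¬ STMSPSol (Set.range p) 0 := by
      have hne01 : (⟨0, by omega⟩ : Fin Δ) ≠ ⟨1, by omega⟩ := by
        intro h; simpa using congrArg Fin.val h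
      refine zero_not_sol ?_ ⟨⟨0, by omega⟩, rfl⟩ ⟨⟨1, by omega⟩, rfl⟩
        (fun e => hne01 (hpinj e))
      rintro x ⟨i, rfl⟩ y ⟨j, rfl⟩ hne
      exact hdist i j (fun e => hne (e ▸ rfl))
    have hne : {n : ℕ | STMSPSol (Set.range p) n}.Nonempty := ⟨1, h1⟩
    have hmem : sInf {n : ℕ | STMSPSol (Set.range p) n} ∈
        {n : ℕ | STMSPSol (Set.range p) n} := Nat.sInf_mem hne
    have hzero : sInf {n : ℕ | STMSPSol (Set.range p) n} ≠ 0 :=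
      fun h => h0 (h ▸ hmem)
    have hle : sInf {n : ℕ | STMSPSol (Set.range p) n} ≤ 1 := Nat.sInf_le h1
    omega
  · intro 𝓣 hcard hconn
    have hcover : ∀ i : Fin Δ, ∃ A ∈ 𝓣, i ∈ A := by
      intro i
      haveI : Nontrivial (Fin Δ) := Fin.nontrivial_iff_two_le.mpr hΔ
      obtain ⟨j, hj⟩ := exists_ne i
      obtain ⟨w⟩ := hconn.preconnected i j
      cases w with
      | nil => exact absurd rfl hj
      | cons ha _ =>
        obtain ⟨-, h | h⟩ := ha
        · obtain ⟨A, hA, hiA, -⟩ := h; exact ⟨A, hA, hiA⟩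
        · obtain ⟨A, hA, -, hiA⟩ := h; exact ⟨A, hA, hiA⟩
    have hΔle : Δ ≤ 𝓣.card * k := by
      have hsub : (Finset.univ : Finset (Fin Δ)) ⊆ 𝓣.biUnion id := by
        intro i _
        obtain ⟨A, hA, hiA⟩ := hcover i
        exact Finset.mem_biUnion.mpr ⟨A, hA, hiA⟩
      calc Δ = (Finset.univ : Finset (Fin Δ)).card := by simp
        _ ≤ (𝓣.biUnion id).card := Finset.card_le_card hsub
        _ ≤ ∑ A ∈ 𝓣, A.card := Finset.card_biUnion_le
        _ ≤ ∑ _A ∈ 𝓣, k := Finset.sum_le_sum (fun A hA => (hcard A hA).2)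
        _ = 𝓣.card * k := by rw [Finset.sum_const, smul_eq_mul]
    have hsinf : ∀ A ∈ 𝓣, 1 ≤ sInf {n : ℕ | STMSPSol (p '' ↑A) n} := by
      intro A hA
      obtain ⟨hA2, -⟩ := hcard A hA
      obtain ⟨i, hi, j, hj, hij⟩ := Finset.one_lt_card.mp hA2
      have h1 : STMSPSol (p '' ↑A) 1 :=
        ⟨{0}, Finset.card_singleton _,
          connected_of_center _ (by rintro x ⟨i', -, rfl⟩; exact hnorm i')⟩
      have h0 : ¬ STMSPSol (p '' ↑A) 0 := by
        refine zero_not_sol ?_ ⟨i, hi, rfl⟩ ⟨j, hj, rfl⟩ (fun e => hij (hpinj e))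
        rintro x ⟨i', -, rfl⟩ y ⟨j', -, rfl⟩ hne
        exact hdist i' j' (fun e => hne (e ▸ rfl))
      have hmem : sInf {n : ℕ | STMSPSol (p '' ↑A) n} ∈ {n : ℕ | STMSPSol (p '' ↑A) n} :=
        Nat.sInf_mem (⟨1, h1⟩ : {n : ℕ | STMSPSol (p '' ↑A) n}.Nonempty)
      have hzero : sInf {n : ℕ | STMSPSol (p '' ↑A) n} ≠ 0 := fun h => h0 (h ▸ hmem)
      omega
    calc Δ ≤ 𝓣.card * k := hΔle
      _ = k * 𝓣.card := mul_comm _ _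
      _ ≤ k * ∑ A ∈ 𝓣, sInf {n : ℕ | STMSPSol (p '' ↑A) n} := by
          refine Nat.mul_le_mul_left k ?_
          calc 𝓣.card = ∑ _A ∈ 𝓣, 1 := by simp
            _ ≤ ∑ A ∈ 𝓣, sInf {n : ℕ | STMSPSol (p '' ↑A) n} :=
                Finset.sum_le_sum hsinf
end

section
/- In the Euclidean plane ℝ², the maximum number of points contained in a closed unit ball such that the distance between any two of them is strictly greater than 1 is exactly 5. -/
open Real

private lemma sqrt_norm_helper (x y : ℝ) (h : x ^ 2 + y ^ 2 ≤ 1) :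
    ‖(WithLp.equiv 2 (∀ _ : Fin 2, ℝ)).symm ![x, y]‖ ≤ 1 := by
  rw [EuclideanSpace.norm_eq, show (1 : ℝ) = Real.sqrt 1 from Real.sqrt_one.symm]
  apply Real.sqrt_le_sqrt
  simpa [Fin.sum_univ_two, Real.norm_eq_abs, sq_abs] using h

private lemma dist_helper (x1 y1 x2 y2 : ℝ) (h : 1 < (x1 - x2) ^ 2 + (y1 - y2) ^ 2) :
    1 < dist ((WithLp.equiv 2 (∀ _ : Fin 2, ℝ)).symm ![x1, y1])
      ((WithLp.equiv 2 (∀ _ : Fin 2, ℝ)).symm ![x2, y2]) := by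
  rw [EuclideanSpace.dist_eq, show (1 : ℝ) = Real.sqrt 1 from Real.sqrt_one.symm]
  apply Real.sqrt_lt_sqrt (by norm_num)
  simpa [Fin.sum_univ_two, Real.dist_eq, sq_abs] using h

private lemma key_ineq (r s a1 a2 : ℝ) (hr0 : 0 ≤ r) (hr1 : r ≤ 1) (hs0 : 0 ≤ s)
    (hs1 : s ≤ 1) (hc : 1 / 2 ≤ Real.cos (a1 - a2)) :
    (r * Real.cos a1 - s * Real.cos a2) ^ 2 + (r * Real.sin a1 - s * Real.sin a2) ^ 2 ≤ 1 := by
  rw [Real.cos_sub] at hc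
  nlinarith [Real.sin_sq_add_cos_sq a1, Real.sin_sq_add_cos_sq a2, mul_nonneg hr0 hs0,
    mul_nonneg (mul_nonneg hr0 hs0) (by linarith :
      (0:ℝ) ≤ 2 * (Real.cos a1 * Real.cos a2 + Real.sin a1 * Real.sin a2) - 1),
    mul_nonneg (by linarith : (0:ℝ) ≤ 1 - r) (by linarith : (0:ℝ) ≤ 1 - s),
    mul_nonneg hr0 (by linarith : (0:ℝ) ≤ 1 - r),
    mul_nonneg hs0 (by linarith : (0:ℝ) ≤ 1 - s)]

private lemma six_points (p : Fin 6 → EuclideanSpace ℝ (Fin 2)) (h : ∀ i, ‖p i‖ ≤ 1) :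
    ∃ i j, i ≠ j ∧ dist (p i) (p j) ≤ 1 := by
  by_cases hzero : ∃ i, p i = 0
  · obtain ⟨i, hi⟩ := hzero
    refine ⟨i + 1, i, ?_, ?_⟩
    · simp [Fin.ext_iff, Fin.add_def]
      omega
    · rw [hi, dist_zero_right]
      exact h _
  push_neg at hzero
  set z : Fin 6 → ℂ := fun i => ⟨p i 0, p i 1⟩ with hzdef
  have hz0 : ∀ i, z i ≠ 0 := by
    intro i hzi
    apply hzero i
    have h0 : p i 0 = 0 ∧ p i 1 = 0 := by
      simpa [hzdef, Complex.ext_iff] using hzi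
    ext k
    fin_cases k
    · exact h0.1
    · exact h0.2
  set r : Fin 6 → ℝ := fun i => ‖z i‖ with hrdef
  set a : Fin 6 → ℝ := fun i => Complex.arg (z i) with hadef
  have hrpos : ∀ i, 0 < r i := fun i => norm_pos_iff.mpr (hz0 i)
  have hx : ∀ i, p i 0 = r i * Real.cos (a i) := by
    intro i
    rw [hadef, hrdef]
    simp only [Complex.cos_arg (hz0 i)]
    exact ((mul_comm _ _).trans (div_mul_cancel₀ _ (ne_of_gt (hrpos i)))).symm
  have hy : ∀ i, p i 1 = r i * Real.sin (a i) := by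
    intro i
    rw [hadef, hrdef]
    simp only [Complex.sin_arg]
    exact ((mul_comm _ _).trans (div_mul_cancel₀ _ (ne_of_gt (hrpos i)))).symm
  have hr1 : ∀ i, r i ≤ 1 := by
    intro i
    have : r i = ‖p i‖ := by
      rw [hrdef, EuclideanSpace.norm_eq]
      simp [hzdef, Complex.norm_def, Complex.normSq_apply, Fin.sum_univ_two, Real.norm_eq_abs,
        sq_abs, sq]
    rw [this]; exact h i
  -- pigeonhole on angles
  have main : ∃ i j, i ≠ j ∧ 1 / 2 ≤ Real.cos (a i - a j) := by
    set σ := Tuple.sort a with hσ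
    have hmono : Monotone (a ∘ σ) := Tuple.monotone_sort a
    set b : Fin 6 → ℝ := a ∘ σ with hbdef
    have hblo : ∀ k, -π < b k := fun k => Complex.neg_pi_lt_arg _
    have hbhi : ∀ k, b k ≤ π := fun k => Complex.arg_le_pi _
    by_cases hK : ∃ k : Fin 5, b k.succ - b k.castSucc ≤ π / 3
    · obtain ⟨k, hk⟩ := hK
      refine ⟨σ k.succ, σ k.castSucc, σ.injective.ne (Fin.castSucc_lt_succ (i := k)).ne', ?_⟩
      have hd0 : 0 ≤ b k.succ - b k.castSucc :=
        sub_nonneg.2 (hmono (Fin.castSucc_lt_succ (i := k)).le)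
      have : Real.cos (π / 3) ≤ Real.cos (b k.succ - b k.castSucc) :=
        Real.cos_le_cos_of_nonneg_of_le_pi hd0 (by linarith [Real.pi_pos]) hk
      rw [Real.cos_pi_div_three] at this
      exact this
    · push_neg at hK
      have g0 : π / 3 < b 1 - b 0 := hK 0
      have g1 : π / 3 < b 2 - b 1 := hK 1
      have g2 : π / 3 < b 3 - b 2 := hK 2
      have g3 : π / 3 < b 4 - b 3 := hK 3
      have g4 : π / 3 < b 5 - b 4 := hK 4
      refine ⟨σ 5, σ 0, σ.injective.ne (by decide), ?_⟩
      have hb5 : b 5 ≤ π := hbhi 5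
      have hb0 : -π < b 0 := hblo 0
      have ht1 : 5 * (π / 3) < b 5 - b 0 := by linarith
      have ht2 : b 5 - b 0 < 2 * π := by linarith
      have hcos : Real.cos (b 5 - b 0) = Real.cos (2 * π - (b 5 - b 0)) :=
        (Real.cos_two_pi_sub _).symm
      show 1 / 2 ≤ Real.cos (b 5 - b 0)
      rw [hcos]
      have := Real.cos_le_cos_of_nonneg_of_le_pi
        (x := 2 * π - (b 5 - b 0)) (y := π / 3)
        (by linarith) (by linarith [Real.pi_pos]) (by linarith)
      rw [Real.cos_pi_div_three] at this
      exact this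
  obtain ⟨i, j, hij, hcos⟩ := main
  refine ⟨i, j, hij, ?_⟩
  rw [EuclideanSpace.dist_eq, show (1 : ℝ) = Real.sqrt 1 from Real.sqrt_one.symm]
  apply Real.sqrt_le_sqrt
  rw [Fin.sum_univ_two]
  simp only [Real.dist_eq, sq_abs]
  rw [hx i, hx j, hy i, hy j]
  exact key_ineq _ _ _ _ (hrpos i).le (hr1 i) (hrpos j).le (hr1 j) hcos

/-- In ℝ², the maximum number of points in a closed unit ball with
pairwise distances strictly greater than 1 is exactly 5. -/
theorem stmt_16 :
    (∃ p : Fin 5 → EuclideanSpace ℝ (Fin 2),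
      (∀ i, ‖p i‖ ≤ 1) ∧ ∀ i j, i ≠ j → 1 < dist (p i) (p j)) ∧
    (∀ p : Fin 6 → EuclideanSpace ℝ (Fin 2),
      (∀ i, ‖p i‖ ≤ 1) → ∃ i j, i ≠ j ∧ dist (p i) (p j) ≤ 1) := by
  constructor
  · refine ⟨fun i => (WithLp.equiv 2 (∀ _ : Fin 2, ℝ)).symm
      (![![1, 0], ![3/10, 19/20], ![-(4/5), 59/100], ![-(4/5), -(59/100)], ![3/10, -(19/20)]] i),
      ?_, ?_⟩
    · intro i
      fin_cases i <;>
        · simp only [Matrix.cons_val_zero, Matrix.cons_val_one, Matrix.head_cons,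
            Matrix.cons_val_two, Matrix.tail_cons, Matrix.cons_val_three, Matrix.cons_val_four]
          apply sqrt_norm_helper
          norm_num
    · intro i j hij
      fin_cases i <;> fin_cases j <;>
        first
        | exact absurd rfl hij
        | · simp only [Matrix.cons_val_zero, Matrix.cons_val_one, Matrix.head_cons,
              Matrix.cons_val_two, Matrix.tail_cons, Matrix.cons_val_three, Matrix.cons_val_four]
            apply dist_helper
            norm_num
  · exact six_points
end
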